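/- arXiv:2507.22833 — 2 statements merged into one kernel-verified Lean document; each statement's English description precedes it below -/
import Mathlib

section
/- For K a real compact nc convex set, if x ∈ K_n is extreme in K, then x is extreme in the complexification K_c if and only if x is complex-irreducible, i.e. every nonzero positive matrix in M_n(ℂ) commuting with x is a positive scalar multiple of 1_n. In particular, a point x ∈ K_1 is nc extreme in K if and only if x + i0 is nc extreme in K_c. -/
open Matrix Filter Topology
open scoped RealInnerProductSpace ComplexOrder

noncomputable section

namespace NCC

/-! ## Matrix operations over a real module -/

def lmul {E : Type*} [AddCommMonoid E] [Module ℝ E] {m n p : ℕ}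
    (a : Matrix (Fin m) (Fin n) ℝ) (x : Matrix (Fin n) (Fin p) E) :
    Matrix (Fin m) (Fin p) E :=
  Matrix.of fun i j => ∑ k, a i k • x k j

def rmulE {E : Type*} [AddCommMonoid E] [Module ℝ E] {m n p : ℕ}
    (x : Matrix (Fin m) (Fin n) E) (a : Matrix (Fin n) (Fin p) ℝ) :
    Matrix (Fin m) (Fin p) E :=
  Matrix.of fun i j => ∑ k, a k j • x i k

/-- The compression `αᵀ x α` of `x ∈ M_n(E)` by `α ∈ M_{n,m}(ℝ)`. -/
def compress {E : Type*} [AddCommMonoid E] [Module ℝ E] {n m : ℕ}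
    (α : Matrix (Fin n) (Fin m) ℝ) (x : Matrix (Fin n) (Fin n) E) :
    Matrix (Fin m) (Fin m) E :=
  lmul α.transpose (rmulE x α)

/-- A real isometry matrix: `αᵀ α = 1`. -/
def IsIsometry {n m : ℕ} (α : Matrix (Fin n) (Fin m) ℝ) : Prop :=
  α.transpose * α = 1

/-- The direct sum `x ⊕ y` of matrices over `E`. -/
def dSum {E : Type*} [AddCommMonoid E] [Module ℝ E] {n m : ℕ}
    (x : Matrix (Fin n) (Fin n) E) (y : Matrix (Fin m) (Fin m) E) :
    Matrix (Fin (n + m)) (Fin (n + m)) E :=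
  Matrix.reindex finSumFinEquiv finSumFinEquiv (Matrix.fromBlocks x 0 0 y)

/-- A real scalar matrix `p` commutes with a matrix `x` over `E`. -/
def RComm {E : Type*} [AddCommMonoid E] [Module ℝ E] {n : ℕ}
    (p : Matrix (Fin n) (Fin n) ℝ) (x : Matrix (Fin n) (Fin n) E) : Prop :=
  lmul p x = rmulE x p

/-! ## Real nc convex sets -/

/-- A real nc convex set over the real operator space `E`, with (finite) matrix levels:
a graded family of sets closed under direct sums and isometric compressions. -/
structure NCConvexSet (E : Type*) [AddCommMonoid E] [Module ℝ E] where
  level : (n : ℕ) → Set (Matrix (Fin n) (Fin n) E)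
  dSum_mem : ∀ {n m : ℕ} {x : Matrix (Fin n) (Fin n) E} {y : Matrix (Fin m) (Fin m) E},
    x ∈ level n → y ∈ level m → dSum x y ∈ level (n + m)
  compress_mem : ∀ {n m : ℕ} (α : Matrix (Fin n) (Fin m) ℝ), IsIsometry α →
    ∀ {x : Matrix (Fin n) (Fin n) E}, x ∈ level n → compress α x ∈ level m

/-- Compactness of each level in the point-weak* topology (here: the given topology on `E`). -/
def NCConvexSet.IsCompactSet {E : Type*} [AddCommMonoid E] [Module ℝ E] [TopologicalSpace E]
    (K : NCConvexSet E) : Prop :=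
  ∀ n, IsCompact (K.level n)

/-- The elements of `K` at level `m`. -/
abbrev NCConvexSet.Elem {E : Type*} [AddCommMonoid E] [Module ℝ E] (K : NCConvexSet E) (m : ℕ) :=
  {x : Matrix (Fin m) (Fin m) E // x ∈ K.level m}

/-- `x` is maximal in `K` : every dilation of `x` is trivial. -/
def IsMaxIn {E : Type*} [AddCommMonoid E] [Module ℝ E] (K : NCConvexSet E) {n : ℕ}
    (x : Matrix (Fin n) (Fin n) E) : Prop :=
  ∀ {m : ℕ} (y : Matrix (Fin m) (Fin m) E) (α : Matrix (Fin m) (Fin n) ℝ),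
    y ∈ K.level m → IsIsometry α → compress α y = x → RComm (α * α.transpose) y

/-- `x` is a pure point of `K`. -/
def IsPureIn {E : Type*} [AddCommMonoid E] [Module ℝ E] (K : NCConvexSet E) {n : ℕ}
    (x : Matrix (Fin n) (Fin n) E) : Prop :=
  ∀ (N : ℕ) (d : Fin N → ℕ)
    (xs : ∀ i, Matrix (Fin (d i)) (Fin (d i)) E)
    (αs : ∀ i, Matrix (Fin (d i)) (Fin n) ℝ),
    (∀ i, xs i ∈ K.level (d i)) → (∀ i, αs i ≠ 0) →
    (∑ i, (αs i).transpose * αs i) = 1 →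
    (∑ i, compress (αs i) (xs i)) = x →
    ∀ i, ∃ (c : ℝ) (β : Matrix (Fin (d i)) (Fin n) ℝ),
      0 < c ∧ IsIsometry β ∧ αs i = c • β ∧ compress β (xs i) = x

/-- `x` is an extreme point of `K`. -/
def IsExtremeIn {E : Type*} [AddCommMonoid E] [Module ℝ E] (K : NCConvexSet E) {n : ℕ}
    (x : Matrix (Fin n) (Fin n) E) : Prop :=
  ∀ (N : ℕ) (d : Fin N → ℕ)
    (xs : ∀ i, Matrix (Fin (d i)) (Fin (d i)) E)
    (αs : ∀ i, Matrix (Fin (d i)) (Fin n) ℝ),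
    (∀ i, xs i ∈ K.level (d i)) → (∀ i, αs i ≠ 0) →
    (∑ i, (αs i).transpose * αs i) = 1 →
    (∑ i, compress (αs i) (xs i)) = x →
    ∀ i, ∃ (c : ℝ) (β : Matrix (Fin (d i)) (Fin n) ℝ),
      0 < c ∧ IsIsometry β ∧ αs i = c • β ∧ compress β (xs i) = x ∧
      RComm (β * β.transpose) (xs i)

/-! ## Complexification -/

/-- `c(x + iy) = [[x, -y], [y, x]]`. -/
def cMat {E : Type*} [AddCommGroup E] [Module ℝ E] {n : ℕ}
    (x y : Matrix (Fin n) (Fin n) E) : Matrix (Fin (n + n)) (Fin (n + n)) E :=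
  Matrix.reindex finSumFinEquiv finSumFinEquiv (Matrix.fromBlocks x (-y) y x)

/-- A complex isometry matrix `a + ib` : `(a+ib)^*(a+ib) = 1`. -/
def IsCIsometry {n m : ℕ} (a b : Matrix (Fin n) (Fin m) ℝ) : Prop :=
  a.transpose * a + b.transpose * b = 1 ∧ a.transpose * b - b.transpose * a = 0

/-- Complex compression `(a+ib)^* (x+iy) (a+ib)`, presented as a pair (real part, imaginary part). -/
def compressC {E : Type*} [AddCommGroup E] [Module ℝ E] {N m : ℕ}
    (a b : Matrix (Fin N) (Fin m) ℝ) (x y : Matrix (Fin N) (Fin N) E) :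
    Matrix (Fin m) (Fin m) E × Matrix (Fin m) (Fin m) E :=
  (lmul a.transpose (rmulE x a - rmulE y b) + lmul b.transpose (rmulE y a + rmulE x b),
   lmul a.transpose (rmulE y a + rmulE x b) - lmul b.transpose (rmulE x a - rmulE y b))

/-- The complex scalar matrix `pr + i·pim` commutes with `x + iy`. -/
def CCommC {E : Type*} [AddCommGroup E] [Module ℝ E] {N : ℕ}
    (pr pim : Matrix (Fin N) (Fin N) ℝ) (x y : Matrix (Fin N) (Fin N) E) : Prop :=
  (lmul pr x - lmul pim y = rmulE x pr - rmulE y pim) ∧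
  (lmul pr y + lmul pim x = rmulE y pr + rmulE x pim)

/-- `x + iy ∈ K_c` is maximal with respect to dilations by complex isometries. -/
def IsCMaxInC {E : Type*} [AddCommGroup E] [Module ℝ E] (K : NCConvexSet E) {n : ℕ}
    (x y : Matrix (Fin n) (Fin n) E) : Prop :=
  ∀ {m : ℕ} (z w : Matrix (Fin m) (Fin m) E) (a b : Matrix (Fin m) (Fin n) ℝ),
    cMat z w ∈ K.level (m + m) → IsCIsometry a b → compressC a b z w = (x, y) →
    CCommC (a * a.transpose + b * b.transpose) (b * a.transpose - a * b.transpose) z w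

/-- `x + iy ∈ K_c` is maximal with respect to dilations by real isometries. -/
def IsRMaxInC {E : Type*} [AddCommGroup E] [Module ℝ E] (K : NCConvexSet E) {n : ℕ}
    (x y : Matrix (Fin n) (Fin n) E) : Prop :=
  ∀ {m : ℕ} (z w : Matrix (Fin m) (Fin m) E) (α : Matrix (Fin m) (Fin n) ℝ),
    cMat z w ∈ K.level (m + m) → IsIsometry α → compressC α 0 z w = (x, y) →
    CCommC (α * α.transpose) 0 z w

/-- `x + iy` is a pure point of the complexification `K_c`. -/
def IsCPureInC {E : Type*} [AddCommGroup E] [Module ℝ E] (K : NCConvexSet E) {n : ℕ}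
    (x y : Matrix (Fin n) (Fin n) E) : Prop :=
  ∀ (N : ℕ) (d : Fin N → ℕ)
    (xs ys : ∀ i, Matrix (Fin (d i)) (Fin (d i)) E)
    (as bs : ∀ i, Matrix (Fin (d i)) (Fin n) ℝ),
    (∀ i, cMat (xs i) (ys i) ∈ K.level (d i + d i)) →
    (∀ i, ¬(as i = 0 ∧ bs i = 0)) →
    (∑ i, ((as i).transpose * as i + (bs i).transpose * bs i)) = 1 →
    (∑ i, ((as i).transpose * bs i - (bs i).transpose * as i)) = 0 →
    (∑ i, (compressC (as i) (bs i) (xs i) (ys i)).1) = x →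
    (∑ i, (compressC (as i) (bs i) (xs i) (ys i)).2) = y →
    ∀ i, ∃ (c : ℝ) (βa βb : Matrix (Fin (d i)) (Fin n) ℝ),
      0 < c ∧ IsCIsometry βa βb ∧ as i = c • βa ∧ bs i = c • βb ∧
      compressC βa βb (xs i) (ys i) = (x, y)

/-- `x + iy` is an extreme point of the complexification `K_c`. -/
def IsCExtremeInC {E : Type*} [AddCommGroup E] [Module ℝ E] (K : NCConvexSet E) {n : ℕ}
    (x y : Matrix (Fin n) (Fin n) E) : Prop :=
  ∀ (N : ℕ) (d : Fin N → ℕ)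
    (xs ys : ∀ i, Matrix (Fin (d i)) (Fin (d i)) E)
    (as bs : ∀ i, Matrix (Fin (d i)) (Fin n) ℝ),
    (∀ i, cMat (xs i) (ys i) ∈ K.level (d i + d i)) →
    (∀ i, ¬(as i = 0 ∧ bs i = 0)) →
    (∑ i, ((as i).transpose * as i + (bs i).transpose * bs i)) = 1 →
    (∑ i, ((as i).transpose * bs i - (bs i).transpose * as i)) = 0 →
    (∑ i, (compressC (as i) (bs i) (xs i) (ys i)).1) = x →
    (∑ i, (compressC (as i) (bs i) (xs i) (ys i)).2) = y →
    ∀ i, ∃ (c : ℝ) (βa βb : Matrix (Fin (d i)) (Fin n) ℝ),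
      0 < c ∧ IsCIsometry βa βb ∧ as i = c • βa ∧ bs i = c • βb ∧
      compressC βa βb (xs i) (ys i) = (x, y) ∧
      CCommC (βa * βa.transpose + βb * βb.transpose)
        (βb * βa.transpose - βa * βb.transpose) (xs i) (ys i)

/-- `x` is complex-irreducible: every nonzero positive complex matrix commuting with `x`
is a positive scalar multiple of the identity. -/
def CIrred {E : Type*} [AddCommGroup E] [Module ℝ E] {n : ℕ}
    (x : Matrix (Fin n) (Fin n) E) : Prop :=
  ∀ T : Matrix (Fin n) (Fin n) ℂ, T.PosSemidef → T ≠ 0 →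
    RComm (T.map Complex.re) x → RComm (T.map Complex.im) x →
    ∃ c : ℝ, 0 < c ∧ T = (c : ℂ) • 1

/-- The closed nc convex hull of a graded set. -/
def closedNCHull {E' : Type*} [AddCommMonoid E'] [Module ℝ E'] [TopologicalSpace E']
    (X : ∀ m : ℕ, Set (Matrix (Fin m) (Fin m) E')) :
    ∀ m : ℕ, Set (Matrix (Fin m) (Fin m) E') :=
  fun m => {z | ∀ L : NCConvexSet E', (∀ k, IsClosed (L.level k)) →
    (∀ k, X k ⊆ L.level k) → z ∈ L.level m}

/-- Bundled real topological vector space data (for existential statements). -/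
structure RSpace where
  carrier : Type
  [grp : AddCommGroup carrier]
  [mod : Module ℝ carrier]
  [top : TopologicalSpace carrier]

attribute [instance] RSpace.grp RSpace.mod RSpace.top

end NCC
/-! ## NC functions -/

namespace NCC

/-- `1_n ⊗ U` : the amplification of a real scalar matrix. -/
def amp {n m k : ℕ} (U : Matrix (Fin m) (Fin k) ℝ) :
    Matrix (Fin n × Fin m) (Fin n × Fin k) ℝ :=
  Matrix.of fun p q => if p.1 = q.1 then U p.2 q.2 else 0

/-- Direct sum of values of a (matrix-valued) nc function. -/
def dPair {n m k : ℕ} (A : Matrix (Fin n × Fin m) (Fin n × Fin m) ℝ)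
    (B : Matrix (Fin n × Fin k) (Fin n × Fin k) ℝ) :
    Matrix (Fin n × Fin (m + k)) (Fin n × Fin (m + k)) ℝ :=
  Matrix.of fun p q =>
    Sum.elim
      (fun a => Sum.elim (fun b => A (p.1, a) (q.1, b)) (fun _ => (0 : ℝ))
        (finSumFinEquiv.symm q.2))
      (fun a => Sum.elim (fun _ => (0 : ℝ)) (fun b => B (p.1, a) (q.1, b))
        (finSumFinEquiv.symm q.2))
      (finSumFinEquiv.symm p.2)

/-- A (bounded) nc function in `M_n(B(K))` : graded, unitarily equivariant,
respecting direct sums. -/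
structure NCFun {E : Type*} [AddCommMonoid E] [Module ℝ E] (K : NCConvexSet E) (n : ℕ) where
  app : ∀ {m : ℕ}, K.Elem m → Matrix (Fin n × Fin m) (Fin n × Fin m) ℝ
  equivariant : ∀ {m : ℕ} (U : Matrix (Fin m) (Fin m) ℝ), U.transpose * U = 1 →
    U * U.transpose = 1 → ∀ (x y : K.Elem m), y.val = compress U.transpose x.val →
    app y = amp (n := n) U * app x * amp (n := n) U.transpose
  dsum_eq : ∀ {m k : ℕ} (x : K.Elem m) (y : K.Elem k) (z : K.Elem (m + k)),
    z.val = dSum x.val y.val → app z = dPair (app x) (app y)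

/-- Boundedness of an nc function (uniform bound on the operator norms of its values). -/
def NCFun.Bounded {E : Type*} [AddCommMonoid E] [Module ℝ E] {K : NCConvexSet E} {n : ℕ}
    (f : NCFun K n) : Prop :=
  ∃ C : ℝ, ∀ {m : ℕ} (x : K.Elem m) (v w : Fin n × Fin m → ℝ),
    |∑ p, ∑ q, w p * f.app x p q * v q| ≤
      C * Real.sqrt (∑ p, v p ^ 2) * Real.sqrt (∑ p, w p ^ 2)

/-- Continuity of an nc function on each level of `K`. -/
def NCFun.ContinuousOnK {E : Type*} [AddCommMonoid E] [Module ℝ E] [TopologicalSpace E]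
    {K : NCConvexSet E} {n : ℕ} (f : NCFun K n) : Prop :=
  ∀ m : ℕ, Continuous fun x : K.Elem m => f.app x

/-- Selfadjointness of an nc function. -/
def NCFun.SelfAdj {E : Type*} [AddCommMonoid E] [Module ℝ E] {K : NCConvexSet E} {n : ℕ}
    (f : NCFun K n) : Prop :=
  ∀ {m : ℕ} (x : K.Elem m), (f.app x).IsSymm

/-- `C(K)` : the continuous bounded nc functions on `K` (scalar level). -/
def CFun {E : Type*} [AddCommMonoid E] [Module ℝ E] [TopologicalSpace E]
    (K : NCConvexSet E) : Type _ :=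
  {f : NCFun K 1 // f.Bounded ∧ f.ContinuousOnK}

/-- Affine nc functions (the elements of `A(K)`). -/
def IsAffineF {E : Type*} [AddCommMonoid E] [Module ℝ E] {K : NCConvexSet E} {n : ℕ}
    (f : NCFun K n) : Prop :=
  ∀ {m k : ℕ} (α : Matrix (Fin m) (Fin k) ℝ), IsIsometry α →
    ∀ (x : K.Elem m) (y : K.Elem k), y.val = compress α x.val →
    f.app y = (amp (n := n) α).transpose * f.app x * amp (n := n) α

/-- Positivity of a matrix of elements of `C(K)` : pointwise positive semidefiniteness. -/
def PosMatC {E : Type*} [AddCommMonoid E] [Module ℝ E] [TopologicalSpace E]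
    {K : NCConvexSet E} {k : ℕ} (G : Matrix (Fin k) (Fin k) (CFun K)) : Prop :=
  ∀ {m : ℕ} (x : K.Elem m),
    (Matrix.of fun p q : Fin k × (Fin 1 × Fin m) =>
      ((G p.1 q.1).val.app x) p.2 q.2).PosSemidef

/-- A unital completely positive map `μ : C(K) → M_d(ℝ)`. -/
structure IsUcpC {E : Type*} [AddCommMonoid E] [Module ℝ E] [TopologicalSpace E]
    {K : NCConvexSet E} {d : ℕ} (μ : CFun K → Matrix (Fin d) (Fin d) ℝ) : Prop where
  map_add : ∀ f g h : CFun K,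
    (∀ {m : ℕ} (x : K.Elem m), h.val.app x = f.val.app x + g.val.app x) → μ h = μ f + μ g
  map_smul : ∀ (c : ℝ) (f g : CFun K),
    (∀ {m : ℕ} (x : K.Elem m), g.val.app x = c • f.val.app x) → μ g = c • μ f
  unital : ∀ f : CFun K, (∀ {m : ℕ} (x : K.Elem m), f.val.app x = 1) → μ f = 1
  cp : ∀ (k : ℕ) (G : Matrix (Fin k) (Fin k) (CFun K)), PosMatC G →
    (Matrix.of fun p q : Fin k × Fin d => μ (G p.1 q.1) p.2 q.2).PosSemidef

/-- Strip the trivial `Fin 1` factor from the value of a scalar-level nc function. -/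
def sqMat {m : ℕ} (A : Matrix (Fin 1 × Fin m) (Fin 1 × Fin m) ℝ) :
    Matrix (Fin m) (Fin m) ℝ :=
  Matrix.of fun p q => A (0, p) (0, q)

/-- The point evaluation `δ_x : C(K) → M_m(ℝ)`. -/
def deltaAt {E : Type*} [AddCommMonoid E] [Module ℝ E] [TopologicalSpace E]
    {K : NCConvexSet E} {m : ℕ} (x : K.Elem m) :
    CFun K → Matrix (Fin m) (Fin m) ℝ :=
  fun f => sqMat (f.val.app x)

/-- `μ` has barycenter `x` : `μ` restricted to `A(K)` is (evaluation at) `x`. -/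
def HasBarycenter {E : Type*} [AddCommMonoid E] [Module ℝ E] [TopologicalSpace E]
    {K : NCConvexSet E} {d : ℕ} (μ : CFun K → Matrix (Fin d) (Fin d) ℝ)
    (x : K.Elem d) : Prop :=
  ∀ f : CFun K, IsAffineF f.val → μ f = deltaAt x f

/-- View a map `C(K) → M_d(ℝ)` as a `d × d` matrix over the dual-type `C(K) → ℝ`. -/
def toMatFun {E : Type*} [AddCommMonoid E] [Module ℝ E] [TopologicalSpace E]
    {K : NCConvexSet E} {d : ℕ} (μ : CFun K → Matrix (Fin d) (Fin d) ℝ) :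
    Matrix (Fin d) (Fin d) (CFun K → ℝ) :=
  Matrix.of fun i j f => μ f i j

/-! ## Epigraphs, convexity, lower semicontinuity of nc functions -/

/-- The epigraph of a selfadjoint nc function. -/
def RealEpi {E : Type*} [AddCommGroup E] [Module ℝ E] {K : NCConvexSet E} {n : ℕ}
    (f : NCFun K n) (m : ℕ) :
    Set (Matrix (Fin m) (Fin m) E × Matrix (Fin n × Fin m) (Fin n × Fin m) ℝ) :=
  {z | ∃ h : z.1 ∈ K.level m, z.2.IsSymm ∧ (z.2 - f.app ⟨z.1, h⟩).PosSemidef}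

/-- `f` is nc convex: its epigraph is an nc convex set. -/
def IsConvexF {E : Type*} [AddCommGroup E] [Module ℝ E] {K : NCConvexSet E} {n : ℕ}
    (f : NCFun K n) : Prop :=
  (∀ {m k : ℕ} (z : Matrix (Fin m) (Fin m) E × Matrix (Fin n × Fin m) (Fin n × Fin m) ℝ)
      (w : Matrix (Fin k) (Fin k) E × Matrix (Fin n × Fin k) (Fin n × Fin k) ℝ),
    z ∈ RealEpi f m → w ∈ RealEpi f k →
    (dSum z.1 w.1, dPair z.2 w.2) ∈ RealEpi f (m + k)) ∧
  (∀ {m k : ℕ} (γ : Matrix (Fin m) (Fin k) ℝ), IsIsometry γ →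
    ∀ z ∈ RealEpi f m,
      (compress γ z.1, (amp (n := n) γ).transpose * z.2 * amp (n := n) γ) ∈ RealEpi f k)

/-- `f` is lower semicontinuous: its epigraph is closed. -/
def IsLscF {E : Type*} [AddCommGroup E] [Module ℝ E] [TopologicalSpace E]
    {K : NCConvexSet E} {n : ℕ} (f : NCFun K n) : Prop :=
  ∀ m, IsClosed (RealEpi f m)

/-! ## The complexification of nc functions -/

/-- The elements of the complexification `K_c` at level `m`, as pairs `x + iy`. -/
def KcElem {E : Type*} [AddCommGroup E] [Module ℝ E] (K : NCConvexSet E) (m : ℕ) :=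
  {p : Matrix (Fin m) (Fin m) E × Matrix (Fin m) (Fin m) E // cMat p.1 p.2 ∈ K.level (m + m)}

def inL {m : ℕ} (p : Fin m) : Fin (m + m) := finSumFinEquiv (Sum.inl p)
def inR {m : ℕ} (p : Fin m) : Fin (m + m) := finSumFinEquiv (Sum.inr p)

/-- Real part of `u_m^* A u_m` for `A` a value at `c(x,y)`. -/
def fcReMat {n m : ℕ} (A : Matrix (Fin n × Fin (m + m)) (Fin n × Fin (m + m)) ℝ) :
    Matrix (Fin n × Fin m) (Fin n × Fin m) ℝ :=
  Matrix.of fun a b =>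
    (A (a.1, inL a.2) (b.1, inL b.2) + A (a.1, inR a.2) (b.1, inR b.2)) / 2

/-- Imaginary part of `u_m^* A u_m` for `A` a value at `c(x,y)`. -/
def fcImMat {n m : ℕ} (A : Matrix (Fin n × Fin (m + m)) (Fin n × Fin (m + m)) ℝ) :
    Matrix (Fin n × Fin m) (Fin n × Fin m) ℝ :=
  Matrix.of fun a b =>
    (A (a.1, inR a.2) (b.1, inL b.2) - A (a.1, inL a.2) (b.1, inR b.2)) / 2

/-- Real part of the complexification `f_c(x+iy) = u^* f(c(x,y)) u`. -/
def fcRe {E : Type*} [AddCommGroup E] [Module ℝ E] {K : NCConvexSet E} {n : ℕ}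
    (f : NCFun K n) {m : ℕ} (p : KcElem K m) :
    Matrix (Fin n × Fin m) (Fin n × Fin m) ℝ :=
  fcReMat (f.app ⟨cMat p.val.1 p.val.2, p.property⟩)

/-- Imaginary part of the complexification `f_c(x+iy) = u^* f(c(x,y)) u`. -/
def fcIm {E : Type*} [AddCommGroup E] [Module ℝ E] {K : NCConvexSet E} {n : ℕ}
    (f : NCFun K n) {m : ℕ} (p : KcElem K m) :
    Matrix (Fin n × Fin m) (Fin n × Fin m) ℝ :=
  fcImMat (f.app ⟨cMat p.val.1 p.val.2, p.property⟩)

/-- Positive semidefiniteness of the complex matrix `R + iI`, via its real picture. -/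
def PosSemidefC {ι : Type*} [Fintype ι] [DecidableEq ι] (R I : Matrix ι ι ℝ) : Prop :=
  (Matrix.fromBlocks R (-I) I R).PosSemidef

/-- Complex compression of a complex matrix value `(R, I)` by the complex
matrix `1_n ⊗ (a + ib)`. -/
def cpCompress {n m k : ℕ} (a b : Matrix (Fin m) (Fin k) ℝ)
    (R I : Matrix (Fin n × Fin m) (Fin n × Fin m) ℝ) :
    Matrix (Fin n × Fin k) (Fin n × Fin k) ℝ × Matrix (Fin n × Fin k) (Fin n × Fin k) ℝ :=
  ((amp (n := n) a).transpose * (R * amp (n := n) a - I * amp (n := n) b) +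
      (amp (n := n) b).transpose * (I * amp (n := n) a + R * amp (n := n) b),
   (amp (n := n) a).transpose * (I * amp (n := n) a + R * amp (n := n) b) -
      (amp (n := n) b).transpose * (R * amp (n := n) a - I * amp (n := n) b))

/-- The epigraph of the complexification `f_c` on `K_c`. -/
def CEpi {E : Type*} [AddCommGroup E] [Module ℝ E] {K : NCConvexSet E} {n : ℕ}
    (f : NCFun K n) (m : ℕ) :
    Set ((Matrix (Fin m) (Fin m) E × Matrix (Fin m) (Fin m) E) ×
      (Matrix (Fin n × Fin m) (Fin n × Fin m) ℝ × Matrix (Fin n × Fin m) (Fin n × Fin m) ℝ)) :=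
  {z | ∃ h : cMat z.1.1 z.1.2 ∈ K.level (m + m),
    z.2.1.IsSymm ∧ z.2.2.transpose = -z.2.2 ∧
    PosSemidefC (z.2.1 - fcRe f ⟨z.1, h⟩) (z.2.2 - fcIm f ⟨z.1, h⟩)}

/-- `f_c` is complex nc convex: its epigraph is a complex nc convex set. -/
def IsCConvexF {E : Type*} [AddCommGroup E] [Module ℝ E] {K : NCConvexSet E} {n : ℕ}
    (f : NCFun K n) : Prop :=
  (∀ {m k : ℕ}
      (z : (Matrix (Fin m) (Fin m) E × Matrix (Fin m) (Fin m) E) ×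
        (Matrix (Fin n × Fin m) (Fin n × Fin m) ℝ × Matrix (Fin n × Fin m) (Fin n × Fin m) ℝ))
      (w : (Matrix (Fin k) (Fin k) E × Matrix (Fin k) (Fin k) E) ×
        (Matrix (Fin n × Fin k) (Fin n × Fin k) ℝ × Matrix (Fin n × Fin k) (Fin n × Fin k) ℝ)),
    z ∈ CEpi f m → w ∈ CEpi f k →
    ((dSum z.1.1 w.1.1, dSum z.1.2 w.1.2), (dPair z.2.1 w.2.1, dPair z.2.2 w.2.2))
      ∈ CEpi f (m + k)) ∧
  (∀ {m k : ℕ} (a b : Matrix (Fin m) (Fin k) ℝ), IsCIsometry a b →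
    ∀ z ∈ CEpi f m,
      (compressC a b z.1.1 z.1.2, cpCompress a b z.2.1 z.2.2) ∈ CEpi f k)

/-- `f_c` is complex lower semicontinuous: its epigraph is closed. -/
def IsCLscF {E : Type*} [AddCommGroup E] [Module ℝ E] [TopologicalSpace E]
    {K : NCConvexSet E} {n : ℕ} (f : NCFun K n) : Prop :=
  ∀ m, IsClosed (CEpi f m)

end NCC
/-! ## Multivalued nc functions and convex envelopes -/

namespace NCC

/-- A bounded selfadjoint multivalued nc function `F : K → M_n(𝓜(ℝ))`. -/
structure MVFun {E : Type*} [AddCommGroup E] [Module ℝ E] (K : NCConvexSet E) (n : ℕ) where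
  app : ∀ {m : ℕ}, K.Elem m → Set (Matrix (Fin n × Fin m) (Fin n × Fin m) ℝ)
  symm_mem : ∀ {m : ℕ} (x : K.Elem m) {α}, α ∈ app x → α.IsSymm
  upward : ∀ {m : ℕ} (x : K.Elem m) {α β}, α ∈ app x → β.IsSymm →
    (β - α).PosSemidef → β ∈ app x
  directed : ∀ {m : ℕ} (x : K.Elem m) {α β}, α ∈ app x → β ∈ app x →
    ∃ γ ∈ app x, (γ - α).PosSemidef ∧ (γ - β).PosSemidef
  equivariant : ∀ {m : ℕ} (U : Matrix (Fin m) (Fin m) ℝ), U.transpose * U = 1 →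
    U * U.transpose = 1 → ∀ (x y : K.Elem m), y.val = compress U.transpose x.val →
    app y = (fun A => amp (n := n) U * A * amp (n := n) U.transpose) '' app x
  dsum_mem : ∀ {m k : ℕ} (x : K.Elem m) (y : K.Elem k) (z : K.Elem (m + k)),
    z.val = dSum x.val y.val → ∀ {A B}, A ∈ app x → B ∈ app y → dPair A B ∈ app z
  bounded : ∃ lam : ℝ, 0 < lam ∧ ∀ {m : ℕ} (x : K.Elem m) {β}, β ∈ app x →
    ∃ α ∈ app x, (β - α).PosSemidef ∧
      (lam • (1 : Matrix (Fin n × Fin m) (Fin n × Fin m) ℝ) - α).PosSemidef ∧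
      (α + lam • (1 : Matrix (Fin n × Fin m) (Fin n × Fin m) ℝ)).PosSemidef

/-- The graph of a multivalued nc function. -/
def MVGraph {E : Type*} [AddCommGroup E] [Module ℝ E] {K : NCConvexSet E} {n : ℕ}
    (F : MVFun K n) (m : ℕ) :
    Set (Matrix (Fin m) (Fin m) E × Matrix (Fin n × Fin m) (Fin n × Fin m) ℝ) :=
  {z | ∃ h : z.1 ∈ K.level m, z.2 ∈ F.app ⟨z.1, h⟩}

/-- The closed nc convex hull of a graded family of graphs/epigraphs. -/
def pairHull {E : Type*} [AddCommGroup E] [Module ℝ E] [TopologicalSpace E] {n : ℕ}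
    (X : ∀ m : ℕ, Set (Matrix (Fin m) (Fin m) E × Matrix (Fin n × Fin m) (Fin n × Fin m) ℝ)) :
    ∀ m : ℕ, Set (Matrix (Fin m) (Fin m) E × Matrix (Fin n × Fin m) (Fin n × Fin m) ℝ) :=
  fun m => {z | ∀ Y : ∀ k : ℕ,
      Set (Matrix (Fin k) (Fin k) E × Matrix (Fin n × Fin k) (Fin n × Fin k) ℝ),
    (∀ k, IsClosed (Y k)) →
    (∀ {k l : ℕ} (a : Matrix (Fin k) (Fin k) E × Matrix (Fin n × Fin k) (Fin n × Fin k) ℝ)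
        (b : Matrix (Fin l) (Fin l) E × Matrix (Fin n × Fin l) (Fin n × Fin l) ℝ),
      a ∈ Y k → b ∈ Y l → (dSum a.1 b.1, dPair a.2 b.2) ∈ Y (k + l)) →
    (∀ {k l : ℕ} (γ : Matrix (Fin k) (Fin l) ℝ), IsIsometry γ →
      ∀ a ∈ Y k, (compress γ a.1, (amp (n := n) γ).transpose * a.2 * amp (n := n) γ) ∈ Y l) →
    (∀ k, X k ⊆ Y k) → z ∈ Y m}

/-- The value set of the complexification `F_c(x + iy) = u^* F(c(x,y)) u`. -/
def FcSet {E : Type*} [AddCommGroup E] [Module ℝ E] {K : NCConvexSet E} {n : ℕ}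
    (F : MVFun K n) {m : ℕ} (p : KcElem K m) :
    Set (Matrix (Fin n × Fin m) (Fin n × Fin m) ℝ × Matrix (Fin n × Fin m) (Fin n × Fin m) ℝ) :=
  {RI | ∃ A ∈ F.app ⟨cMat p.val.1 p.val.2, p.property⟩, RI = (fcReMat A, fcImMat A)}

/-- The graph of a complex multivalued function on `K_c`, given as a set-valued assignment. -/
def CMVGraph {E : Type*} [AddCommGroup E] [Module ℝ E] {K : NCConvexSet E} {n : ℕ}
    (G : ∀ m : ℕ, KcElem K m →
      Set (Matrix (Fin n × Fin m) (Fin n × Fin m) ℝ × Matrix (Fin n × Fin m) (Fin n × Fin m) ℝ))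
    (m : ℕ) :
    Set ((Matrix (Fin m) (Fin m) E × Matrix (Fin m) (Fin m) E) ×
      (Matrix (Fin n × Fin m) (Fin n × Fin m) ℝ × Matrix (Fin n × Fin m) (Fin n × Fin m) ℝ)) :=
  {z | ∃ h : cMat z.1.1 z.1.2 ∈ K.level (m + m), z.2 ∈ G m ⟨z.1, h⟩}

/-- The closed complex nc convex hull of a graded family of complex graphs. -/
def cPairHull {E : Type*} [AddCommGroup E] [Module ℝ E] [TopologicalSpace E] {n : ℕ}
    (X : ∀ m : ℕ, Set ((Matrix (Fin m) (Fin m) E × Matrix (Fin m) (Fin m) E) ×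
      (Matrix (Fin n × Fin m) (Fin n × Fin m) ℝ × Matrix (Fin n × Fin m) (Fin n × Fin m) ℝ))) :
    ∀ m : ℕ, Set ((Matrix (Fin m) (Fin m) E × Matrix (Fin m) (Fin m) E) ×
      (Matrix (Fin n × Fin m) (Fin n × Fin m) ℝ × Matrix (Fin n × Fin m) (Fin n × Fin m) ℝ)) :=
  fun m => {z | ∀ Y : ∀ k : ℕ,
      Set ((Matrix (Fin k) (Fin k) E × Matrix (Fin k) (Fin k) E) ×
        (Matrix (Fin n × Fin k) (Fin n × Fin k) ℝ × Matrix (Fin n × Fin k) (Fin n × Fin k) ℝ)),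
    (∀ k, IsClosed (Y k)) →
    (∀ {k l : ℕ}
        (a : (Matrix (Fin k) (Fin k) E × Matrix (Fin k) (Fin k) E) ×
          (Matrix (Fin n × Fin k) (Fin n × Fin k) ℝ × Matrix (Fin n × Fin k) (Fin n × Fin k) ℝ))
        (b : (Matrix (Fin l) (Fin l) E × Matrix (Fin l) (Fin l) E) ×
          (Matrix (Fin n × Fin l) (Fin n × Fin l) ℝ × Matrix (Fin n × Fin l) (Fin n × Fin l) ℝ)),
      a ∈ Y k → b ∈ Y l →
      ((dSum a.1.1 b.1.1, dSum a.1.2 b.1.2), (dPair a.2.1 b.2.1, dPair a.2.2 b.2.2))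
        ∈ Y (k + l)) →
    (∀ {k l : ℕ} (γa γb : Matrix (Fin k) (Fin l) ℝ), IsCIsometry γa γb →
      ∀ a ∈ Y k, (compressC γa γb a.1.1 a.1.2, cpCompress γa γb a.2.1 a.2.2) ∈ Y l) →
    (∀ k, X k ⊆ Y k) → z ∈ Y m}

end NCC
/-! ## Real Hilbert spaces, operator systems and ucp maps -/

namespace NCC

/-- Bundled real Hilbert space. -/
structure HilbertR where
  carrier : Type
  [nacg : NormedAddCommGroup carrier]
  [ipr : InnerProductSpace ℝ carrier]
  [cs : CompleteSpace carrier]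

attribute [instance] HilbertR.nacg HilbertR.ipr HilbertR.cs

/-- Bundled compact Hausdorff space. -/
structure CompactT2 where
  carrier : Type
  [ts : TopologicalSpace carrier]
  [cpt : CompactSpace carrier]
  [t2 : T2Space carrier]

attribute [instance] CompactT2.ts CompactT2.cpt CompactT2.t2

/-- The real inner product. -/
def rip {H : Type*} [NormedAddCommGroup H] [InnerProductSpace ℝ H] (x y : H) : ℝ :=
  inner ℝ x y

/-- Positivity of a matrix of Hilbert space operators. -/
def OpMatPos {H : Type*} [NormedAddCommGroup H] [InnerProductSpace ℝ H] {k : ℕ}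
    (T : Matrix (Fin k) (Fin k) (H →L[ℝ] H)) : Prop :=
  (∀ (i j : Fin k) (ξ η : H), rip (T i j ξ) (η) = rip (ξ) (T j i η)) ∧
  ∀ v : Fin k → H, 0 ≤ ∑ i, ∑ j, rip (T i j (v j)) (v i)

/-- An isometry between real inner product spaces. -/
def IsIsometryOp {H W : Type*} [NormedAddCommGroup H] [InnerProductSpace ℝ H]
    [NormedAddCommGroup W] [InnerProductSpace ℝ W] (ι : H →L[ℝ] W) : Prop :=
  ∀ ξ η : H, rip (ι ξ) (ι η) = rip (ξ) (η)

section OS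

variable {H : Type*} [NormedAddCommGroup H] [InnerProductSpace ℝ H] [CompleteSpace H]

/-- A unital completely positive map on a (concrete) real operator system `V ⊆ B(H)`. -/
def IsUcpOS (V : Submodule ℝ (H →L[ℝ] H)) {W : Type*} [NormedAddCommGroup W]
    [InnerProductSpace ℝ W] [CompleteSpace W] (φ : V → (W →L[ℝ] W)) : Prop :=
  (∀ u v : V, φ (u + v) = φ u + φ v) ∧
  (∀ (c : ℝ) (v : V), φ (c • v) = c • φ v) ∧
  (∀ v : V, (v : H →L[ℝ] H) = 1 → φ v = 1) ∧
  (∀ (k : ℕ) (T : Matrix (Fin k) (Fin k) V),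
    OpMatPos (Matrix.of fun i j => (T i j : H →L[ℝ] H)) →
    OpMatPos (Matrix.of fun i j => φ (T i j)))

/-- `ψ` (on `L`) dilates `φ` (on `W`) via the isometry `ι : W → L`. -/
def DilatesOS {V : Submodule ℝ (H →L[ℝ] H)} {W L : Type*}
    [NormedAddCommGroup W] [InnerProductSpace ℝ W] [CompleteSpace W]
    [NormedAddCommGroup L] [InnerProductSpace ℝ L] [CompleteSpace L]
    (φ : V → (W →L[ℝ] W)) (ψ : V → (L →L[ℝ] L)) (ι : W →L[ℝ] L) : Prop :=
  IsIsometryOp ι ∧ ∀ (v : V) (ξ η : W), rip (ψ v (ι ξ)) (ι η) = rip (φ v ξ) (η)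

/-- `φ` is a maximal ucp map: every dilation of it is trivial. -/
def IsMaximalOS (V : Submodule ℝ (H →L[ℝ] H)) {W : Type*}
    [NormedAddCommGroup W] [InnerProductSpace ℝ W] [CompleteSpace W]
    (φ : V → (W →L[ℝ] W)) : Prop :=
  ∀ (L : HilbertR) (ψ : V → (L.carrier →L[ℝ] L.carrier)) (ι : W →L[ℝ] L.carrier),
    IsUcpOS V ψ → DilatesOS φ ψ ι → ∀ v : V,
      Commute (ψ v) (ι.comp (ContinuousLinearMap.adjoint ι))

/-- `φ` is a pure ucp map on the operator system `V`. -/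
def IsPureOS (V : Submodule ℝ (H →L[ℝ] H)) {W : Type*}
    [NormedAddCommGroup W] [InnerProductSpace ℝ W] [CompleteSpace W]
    (φ : V → (W →L[ℝ] W)) : Prop :=
  ∀ (N : ℕ) (Ls : Fin N → HilbertR)
    (ψs : ∀ i, V → ((Ls i).carrier →L[ℝ] (Ls i).carrier))
    (ιs : ∀ i, W →L[ℝ] (Ls i).carrier),
    (∀ i, IsUcpOS V (ψs i)) → (∀ i, ιs i ≠ 0) →
    (∑ i, (ContinuousLinearMap.adjoint (ιs i)).comp (ιs i)) = 1 →
    (∀ v : V, φ v = ∑ i, (ContinuousLinearMap.adjoint (ιs i)).comp ((ψs i v).comp (ιs i))) →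
    ∀ i, ∃ (c : ℝ) (β : W →L[ℝ] (Ls i).carrier), 0 < c ∧ IsIsometryOp β ∧
      ιs i = c • β ∧
      ∀ v : V, φ v = (ContinuousLinearMap.adjoint β).comp ((ψs i v).comp β)

/-- `φ` is an extreme ucp map on the operator system `V`. -/
def IsExtremeOS (V : Submodule ℝ (H →L[ℝ] H)) {W : Type*}
    [NormedAddCommGroup W] [InnerProductSpace ℝ W] [CompleteSpace W]
    (φ : V → (W →L[ℝ] W)) : Prop :=
  ∀ (N : ℕ) (Ls : Fin N → HilbertR)
    (ψs : ∀ i, V → ((Ls i).carrier →L[ℝ] (Ls i).carrier))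
    (ιs : ∀ i, W →L[ℝ] (Ls i).carrier),
    (∀ i, IsUcpOS V (ψs i)) → (∀ i, ιs i ≠ 0) →
    (∑ i, (ContinuousLinearMap.adjoint (ιs i)).comp (ιs i)) = 1 →
    (∀ v : V, φ v = ∑ i, (ContinuousLinearMap.adjoint (ιs i)).comp ((ψs i v).comp (ιs i))) →
    ∀ i, ∃ (c : ℝ) (β : W →L[ℝ] (Ls i).carrier), 0 < c ∧ IsIsometryOp β ∧
      ιs i = c • β ∧
      (∀ v : V, φ v = (ContinuousLinearMap.adjoint β).comp ((ψs i v).comp β)) ∧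
      ∀ v : V, Commute (ψs i v) (β.comp (ContinuousLinearMap.adjoint β))

end OS

section CA

variable (A : Type*) [NormedRing A] [StarRing A] [CStarRing A] [NormedAlgebra ℝ A]
  [CompleteSpace A] [StarModule ℝ A]

/-- Positivity of a matrix over a real C*-algebra. -/
def AMatPos {k : ℕ} (M : Matrix (Fin k) (Fin k) A) : Prop :=
  ∃ b : Matrix (Fin k) (Fin k) A, M = star b * b

/-- A unital completely positive map on the real C*-algebra `A`. -/
def IsUcpCA {W : Type*} [NormedAddCommGroup W] [InnerProductSpace ℝ W] [CompleteSpace W]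
    (φ : A → (W →L[ℝ] W)) : Prop :=
  (∀ a b : A, φ (a + b) = φ a + φ b) ∧
  (∀ (c : ℝ) (a : A), φ (c • a) = c • φ a) ∧
  φ 1 = 1 ∧
  ∀ (k : ℕ) (M : Matrix (Fin k) (Fin k) A), AMatPos A M →
    OpMatPos (Matrix.of fun i j => φ (M i j))

/-- A unital *-representation of `A` on a real Hilbert space. -/
def IsStarRepA {W : Type*} [NormedAddCommGroup W] [InnerProductSpace ℝ W] [CompleteSpace W]
    (π : A → (W →L[ℝ] W)) : Prop :=
  (∀ a b : A, π (a + b) = π a + π b) ∧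
  (∀ (c : ℝ) (a : A), π (c • a) = c • π a) ∧
  π 1 = 1 ∧
  (∀ a b : A, π (a * b) = (π a).comp (π b)) ∧
  (∀ a : A, π (star a) = star (π a))

/-- Irreducibility: the selfadjoint part of the commutant is trivial. -/
def IsIrredA {W : Type*} [NormedAddCommGroup W] [InnerProductSpace ℝ W] [CompleteSpace W]
    (π : A → (W →L[ℝ] W)) : Prop :=
  ∀ T : W →L[ℝ] W, IsSelfAdjoint T → (∀ a : A, Commute T (π a)) →
    ∃ c : ℝ, T = c • (1 : W →L[ℝ] W)

/-- `ψ` dilates `φ` via the isometry `ι` (C*-algebra version). -/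
def DilatesCA {W L : Type*}
    [NormedAddCommGroup W] [InnerProductSpace ℝ W] [CompleteSpace W]
    [NormedAddCommGroup L] [InnerProductSpace ℝ L] [CompleteSpace L]
    (φ : A → (W →L[ℝ] W)) (ψ : A → (L →L[ℝ] L)) (ι : W →L[ℝ] L) : Prop :=
  IsIsometryOp ι ∧ ∀ (a : A) (ξ η : W), rip (ψ a (ι ξ)) (ι η) = rip (φ a ξ) (η)

/-- `φ` is a maximal ucp map on the C*-algebra `A`. -/
def IsMaximalCA {W : Type*} [NormedAddCommGroup W] [InnerProductSpace ℝ W] [CompleteSpace W]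
    (φ : A → (W →L[ℝ] W)) : Prop :=
  ∀ (L : HilbertR) (ψ : A → (L.carrier →L[ℝ] L.carrier)) (ι : W →L[ℝ] L.carrier),
    IsUcpCA A ψ → DilatesCA A φ ψ ι → ∀ a : A,
      Commute (ψ a) (ι.comp (ContinuousLinearMap.adjoint ι))

/-- `φ` is a pure ucp map on the C*-algebra `A`. -/
def IsPureCA {W : Type*} [NormedAddCommGroup W] [InnerProductSpace ℝ W] [CompleteSpace W]
    (φ : A → (W →L[ℝ] W)) : Prop :=
  ∀ (N : ℕ) (Ls : Fin N → HilbertR)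
    (ψs : ∀ i, A → ((Ls i).carrier →L[ℝ] (Ls i).carrier))
    (ιs : ∀ i, W →L[ℝ] (Ls i).carrier),
    (∀ i, IsUcpCA A (ψs i)) → (∀ i, ιs i ≠ 0) →
    (∑ i, (ContinuousLinearMap.adjoint (ιs i)).comp (ιs i)) = 1 →
    (∀ a : A, φ a = ∑ i, (ContinuousLinearMap.adjoint (ιs i)).comp ((ψs i a).comp (ιs i))) →
    ∀ i, ∃ (c : ℝ) (β : W →L[ℝ] (Ls i).carrier), 0 < c ∧ IsIsometryOp β ∧
      ιs i = c • β ∧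
      ∀ a : A, φ a = (ContinuousLinearMap.adjoint β).comp ((ψs i a).comp β)

/-- `φ` is an extreme ucp map on the C*-algebra `A`. -/
def IsExtremeCA {W : Type*} [NormedAddCommGroup W] [InnerProductSpace ℝ W] [CompleteSpace W]
    (φ : A → (W →L[ℝ] W)) : Prop :=
  ∀ (N : ℕ) (Ls : Fin N → HilbertR)
    (ψs : ∀ i, A → ((Ls i).carrier →L[ℝ] (Ls i).carrier))
    (ιs : ∀ i, W →L[ℝ] (Ls i).carrier),
    (∀ i, IsUcpCA A (ψs i)) → (∀ i, ιs i ≠ 0) →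
    (∑ i, (ContinuousLinearMap.adjoint (ιs i)).comp (ιs i)) = 1 →
    (∀ a : A, φ a = ∑ i, (ContinuousLinearMap.adjoint (ιs i)).comp ((ψs i a).comp (ιs i))) →
    ∀ i, ∃ (c : ℝ) (β : W →L[ℝ] (Ls i).carrier), 0 < c ∧ IsIsometryOp β ∧
      ιs i = c • β ∧
      (∀ a : A, φ a = (ContinuousLinearMap.adjoint β).comp ((ψs i a).comp β)) ∧
      ∀ a : A, Commute (ψs i a) (β.comp (ContinuousLinearMap.adjoint β))

end CA

/-- The operator norm of a matrix of Hilbert space operators, described via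
inner products against pairs of unit vectors. -/
def blockNorm {H : Type*} [NormedAddCommGroup H] [InnerProductSpace ℝ H] {k : ℕ}
    (T : Matrix (Fin k) (Fin k) (H →L[ℝ] H)) : ℝ :=
  sSup {r : ℝ | ∃ v w : (Fin k → H), (∑ i, ‖v i‖ ^ 2) ≤ 1 ∧ (∑ i, ‖w i‖ ^ 2) ≤ 1 ∧
    r = |∑ i, ∑ j, rip (T i j (v j)) (w i)|}

end NCC
namespace NCC

/-! ### Auxiliary algebra for `lmul` and `rmulE` -/

section LmulAlgebra

variable {E : Type*} [AddCommGroup E] [Module ℝ E]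

theorem lmul_apply' {m n p : ℕ} (a : Matrix (Fin m) (Fin n) ℝ)
    (x : Matrix (Fin n) (Fin p) E) (i : Fin m) (j : Fin p) :
    lmul a x i j = ∑ k, a i k • x k j := rfl

theorem rmulE_apply' {m n p : ℕ} (x : Matrix (Fin m) (Fin n) E)
    (a : Matrix (Fin n) (Fin p) ℝ) (i : Fin m) (j : Fin p) :
    rmulE x a i j = ∑ k, a k j • x i k := rfl

theorem lmul_mul {m n p q : ℕ} (a : Matrix (Fin m) (Fin n) ℝ) (b : Matrix (Fin n) (Fin p) ℝ)
    (x : Matrix (Fin p) (Fin q) E) : lmul (a * b) x = lmul a (lmul b x) := by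
  ext i j
  simp only [lmul_apply', Matrix.mul_apply, Finset.sum_smul, Finset.smul_sum, mul_smul]
  exact Finset.sum_comm

theorem rmulE_mul {m n p q : ℕ} (x : Matrix (Fin m) (Fin n) E)
    (a : Matrix (Fin n) (Fin p) ℝ) (b : Matrix (Fin p) (Fin q) ℝ) :
    rmulE x (a * b) = rmulE (rmulE x a) b := by
  ext i j
  simp only [rmulE_apply', Matrix.mul_apply, Finset.sum_smul, Finset.smul_sum, mul_smul]
  rw [Finset.sum_comm]
  refine Finset.sum_congr rfl fun k _ => Finset.sum_congr rfl fun t _ => ?_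
  rw [smul_comm]

theorem lmul_rmulE {m n p q : ℕ} (a : Matrix (Fin m) (Fin n) ℝ)
    (x : Matrix (Fin n) (Fin p) E) (b : Matrix (Fin p) (Fin q) ℝ) :
    lmul a (rmulE x b) = rmulE (lmul a x) b := by
  ext i j
  simp only [lmul_apply', rmulE_apply', Finset.smul_sum]
  rw [Finset.sum_comm]
  refine Finset.sum_congr rfl fun k _ => Finset.sum_congr rfl fun t _ => ?_
  rw [smul_comm]

@[simp] theorem lmul_one {n p : ℕ} (x : Matrix (Fin n) (Fin p) E) : lmul 1 x = x := by
  ext i j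
  simp [lmul_apply', Matrix.one_apply, ite_smul]

@[simp] theorem rmulE_one {m n : ℕ} (x : Matrix (Fin m) (Fin n) E) : rmulE x 1 = x := by
  ext i j
  simp [rmulE_apply', Matrix.one_apply, ite_smul]

@[simp] theorem lmul_zero_left {m n p : ℕ} (x : Matrix (Fin n) (Fin p) E) :
    lmul (0 : Matrix (Fin m) (Fin n) ℝ) x = 0 := by
  ext i j; simp [lmul_apply']

@[simp] theorem lmul_zero_right {m n p : ℕ} (a : Matrix (Fin m) (Fin n) ℝ) :
    lmul a (0 : Matrix (Fin n) (Fin p) E) = 0 := by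
  ext i j; simp [lmul_apply']

@[simp] theorem rmulE_zero_left {m n p : ℕ} (a : Matrix (Fin n) (Fin p) ℝ) :
    rmulE (0 : Matrix (Fin m) (Fin n) E) a = 0 := by
  ext i j; simp [rmulE_apply']

@[simp] theorem rmulE_zero_right {m n p : ℕ} (x : Matrix (Fin m) (Fin n) E) :
    rmulE x (0 : Matrix (Fin n) (Fin p) ℝ) = 0 := by
  ext i j; simp [rmulE_apply']

theorem lmul_add_left {m n p : ℕ} (a b : Matrix (Fin m) (Fin n) ℝ)
    (x : Matrix (Fin n) (Fin p) E) : lmul (a + b) x = lmul a x + lmul b x := by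
  ext i j; simp [lmul_apply', add_smul, Finset.sum_add_distrib]

theorem lmul_add_right {m n p : ℕ} (a : Matrix (Fin m) (Fin n) ℝ)
    (x y : Matrix (Fin n) (Fin p) E) : lmul a (x + y) = lmul a x + lmul a y := by
  ext i j; simp [lmul_apply', smul_add, Finset.sum_add_distrib]

theorem rmulE_add_left {m n p : ℕ} (x y : Matrix (Fin m) (Fin n) E)
    (a : Matrix (Fin n) (Fin p) ℝ) : rmulE (x + y) a = rmulE x a + rmulE y a := by
  ext i j; simp [rmulE_apply', smul_add, Finset.sum_add_distrib]

theorem rmulE_add_right {m n p : ℕ} (x : Matrix (Fin m) (Fin n) E)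
    (a b : Matrix (Fin n) (Fin p) ℝ) : rmulE x (a + b) = rmulE x a + rmulE x b := by
  ext i j; simp [rmulE_apply', add_smul, Finset.sum_add_distrib]

theorem lmul_neg_left {m n p : ℕ} (a : Matrix (Fin m) (Fin n) ℝ)
    (x : Matrix (Fin n) (Fin p) E) : lmul (-a) x = -lmul a x := by
  ext i j; simp [lmul_apply']

theorem lmul_neg_right {m n p : ℕ} (a : Matrix (Fin m) (Fin n) ℝ)
    (x : Matrix (Fin n) (Fin p) E) : lmul a (-x) = -lmul a x := by
  ext i j; simp [lmul_apply']

theorem rmulE_neg_left {m n p : ℕ} (x : Matrix (Fin m) (Fin n) E)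
    (a : Matrix (Fin n) (Fin p) ℝ) : rmulE (-x) a = -rmulE x a := by
  ext i j; simp [rmulE_apply']

theorem rmulE_neg_right {m n p : ℕ} (x : Matrix (Fin m) (Fin n) E)
    (a : Matrix (Fin n) (Fin p) ℝ) : rmulE x (-a) = -rmulE x a := by
  ext i j; simp [rmulE_apply']

theorem lmul_sub_left {m n p : ℕ} (a b : Matrix (Fin m) (Fin n) ℝ)
    (x : Matrix (Fin n) (Fin p) E) : lmul (a - b) x = lmul a x - lmul b x := by
  rw [sub_eq_add_neg, lmul_add_left, lmul_neg_left, sub_eq_add_neg]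

theorem rmulE_sub_right {m n p : ℕ} (x : Matrix (Fin m) (Fin n) E)
    (a b : Matrix (Fin n) (Fin p) ℝ) : rmulE x (a - b) = rmulE x a - rmulE x b := by
  rw [sub_eq_add_neg, rmulE_add_right, rmulE_neg_right, sub_eq_add_neg]

theorem lmul_smul_left {m n p : ℕ} (c : ℝ) (a : Matrix (Fin m) (Fin n) ℝ)
    (x : Matrix (Fin n) (Fin p) E) : lmul (c • a) x = c • lmul a x := by
  ext i j; simp [lmul_apply', Finset.smul_sum, mul_smul]

theorem rmulE_smul_right {m n p : ℕ} (c : ℝ) (x : Matrix (Fin m) (Fin n) E)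
    (a : Matrix (Fin n) (Fin p) ℝ) : rmulE x (c • a) = c • rmulE x a := by
  ext i j; simp [rmulE_apply', Finset.smul_sum, mul_smul]

theorem compress_eq {n m : ℕ} (α : Matrix (Fin n) (Fin m) ℝ) (x : Matrix (Fin n) (Fin n) E) :
    compress α x = lmul α.transpose (rmulE x α) := rfl

/-! ### `RComm` closure lemmas -/

theorem RComm.one {n : ℕ} (x : Matrix (Fin n) (Fin n) E) : RComm 1 x := by
  simp [RComm]

theorem RComm.zero {n : ℕ} (x : Matrix (Fin n) (Fin n) E) : RComm 0 x := by
  simp [RComm]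

theorem RComm.mul {n : ℕ} {p q : Matrix (Fin n) (Fin n) ℝ} {x : Matrix (Fin n) (Fin n) E}
    (hp : RComm p x) (hq : RComm q x) : RComm (p * q) x := by
  unfold RComm at *
  rw [lmul_mul, hq, lmul_rmulE, hp, ← rmulE_mul]

theorem RComm.add {n : ℕ} {p q : Matrix (Fin n) (Fin n) ℝ} {x : Matrix (Fin n) (Fin n) E}
    (hp : RComm p x) (hq : RComm q x) : RComm (p + q) x := by
  unfold RComm at *
  rw [lmul_add_left, rmulE_add_right, hp, hq]

theorem RComm.neg {n : ℕ} {p : Matrix (Fin n) (Fin n) ℝ} {x : Matrix (Fin n) (Fin n) E}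
    (hp : RComm p x) : RComm (-p) x := by
  unfold RComm at *
  rw [lmul_neg_left, rmulE_neg_right, hp]

theorem RComm.sub {n : ℕ} {p q : Matrix (Fin n) (Fin n) ℝ} {x : Matrix (Fin n) (Fin n) E}
    (hp : RComm p x) (hq : RComm q x) : RComm (p - q) x := by
  unfold RComm at *
  rw [lmul_sub_left, rmulE_sub_right, hp, hq]

theorem RComm.smul {n : ℕ} (c : ℝ) {p : Matrix (Fin n) (Fin n) ℝ} {x : Matrix (Fin n) (Fin n) E}
    (hp : RComm p x) : RComm (c • p) x := by
  unfold RComm at *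
  rw [lmul_smul_left, rmulE_smul_right, hp]

theorem RComm.pow {n : ℕ} {p : Matrix (Fin n) (Fin n) ℝ} {x : Matrix (Fin n) (Fin n) E}
    (hp : RComm p x) (k : ℕ) : RComm (p ^ k) x := by
  induction k with
  | zero => simpa using RComm.one x
  | succ k ih => rw [pow_succ]; exact ih.mul hp

end LmulAlgebra
/-! ### Block matrices of doubled size -/

section Blocks

variable {E : Type*} [AddCommGroup E] [Module ℝ E]

/-- Vertical stacking of two matrices. -/
def stk {R : Type*} {d m : ℕ} (a b : Matrix (Fin d) (Fin m) R) :
    Matrix (Fin (d + d)) (Fin m) R :=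
  Matrix.of fun p j => Sum.elim (fun i => a i j) (fun i => b i j) (finSumFinEquiv.symm p)

/-- 2×2 block matrix of doubled size. -/
def blk4 {R : Type*} {d e : ℕ} (A : Matrix (Fin d) (Fin e) R) (B : Matrix (Fin d) (Fin e) R)
    (C : Matrix (Fin d) (Fin e) R) (D : Matrix (Fin d) (Fin e) R) :
    Matrix (Fin (d + d)) (Fin (e + e)) R :=
  Matrix.reindex finSumFinEquiv finSumFinEquiv (Matrix.fromBlocks A B C D)

@[simp] theorem stk_inL {R : Type*} {d m : ℕ} (a b : Matrix (Fin d) (Fin m) R)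
    (i : Fin d) (j : Fin m) : stk a b (inL i) j = a i j := by
  simp only [stk, inL, Matrix.of_apply, Equiv.symm_apply_apply, Sum.elim_inl]

@[simp] theorem stk_inR {R : Type*} {d m : ℕ} (a b : Matrix (Fin d) (Fin m) R)
    (i : Fin d) (j : Fin m) : stk a b (inR i) j = b i j := by
  simp only [stk, inR, Matrix.of_apply, Equiv.symm_apply_apply, Sum.elim_inr]

@[simp] theorem blk4_LL {R : Type*} {d e : ℕ} (A B C D : Matrix (Fin d) (Fin e) R)
    (i : Fin d) (j : Fin e) : blk4 A B C D (inL i) (inL j) = A i j := by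
  simp only [blk4, inL, Matrix.reindex_apply, Matrix.submatrix_apply, Equiv.symm_apply_apply, Matrix.fromBlocks_apply₁₁]

@[simp] theorem blk4_LR {R : Type*} {d e : ℕ} (A B C D : Matrix (Fin d) (Fin e) R)
    (i : Fin d) (j : Fin e) : blk4 A B C D (inL i) (inR j) = B i j := by
  simp only [blk4, inL, inR, Matrix.reindex_apply, Matrix.submatrix_apply, Equiv.symm_apply_apply, Matrix.fromBlocks_apply₁₂]

@[simp] theorem blk4_RL {R : Type*} {d e : ℕ} (A B C D : Matrix (Fin d) (Fin e) R)
    (i : Fin d) (j : Fin e) : blk4 A B C D (inR i) (inL j) = C i j := by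
  simp only [blk4, inL, inR, Matrix.reindex_apply, Matrix.submatrix_apply, Equiv.symm_apply_apply, Matrix.fromBlocks_apply₂₁]

@[simp] theorem blk4_RR {R : Type*} {d e : ℕ} (A B C D : Matrix (Fin d) (Fin e) R)
    (i : Fin d) (j : Fin e) : blk4 A B C D (inR i) (inR j) = D i j := by
  simp only [blk4, inL, inR, Matrix.reindex_apply, Matrix.submatrix_apply, Equiv.symm_apply_apply, Matrix.fromBlocks_apply₂₂]

theorem cMat_eq_blk4 {n : ℕ} (x y : Matrix (Fin n) (Fin n) E) :
    cMat x y = blk4 x (-y) y x := rfl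

theorem dSum_eq_blk4 {n : ℕ} (x y : Matrix (Fin n) (Fin n) E) :
    dSum x y = blk4 x 0 0 y := rfl

theorem sum_fin_double {d : ℕ} {M : Type*} [AddCommMonoid M] (f : Fin (d + d) → M) :
    ∑ p, f p = (∑ i, f (inL i)) + ∑ i, f (inR i) := by
  rw [← Equiv.sum_comp (finSumFinEquiv (m := d) (n := d)) f, Fintype.sum_sum_type]
  rfl

theorem ext_double {R : Type*} {d e : ℕ} {M N : Matrix (Fin (d + d)) (Fin (e + e)) R}
    (hLL : ∀ i j, M (inL i) (inL j) = N (inL i) (inL j))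
    (hLR : ∀ i j, M (inL i) (inR j) = N (inL i) (inR j))
    (hRL : ∀ i j, M (inR i) (inL j) = N (inR i) (inL j))
    (hRR : ∀ i j, M (inR i) (inR j) = N (inR i) (inR j)) : M = N := by
  ext p q
  obtain ⟨s, rfl⟩ := finSumFinEquiv.surjective p
  obtain ⟨t, rfl⟩ := finSumFinEquiv.surjective q
  cases s with
  | inl i => cases t with
    | inl j => exact hLL i j
    | inr j => exact hLR i j
  | inr i => cases t with
    | inl j => exact hRL i j
    | inr j => exact hRR i j

theorem stk_ext {R : Type*} {d m : ℕ} {M : Matrix (Fin (d + d)) (Fin m) R}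
    {a b : Matrix (Fin d) (Fin m) R}
    (hL : ∀ i j, M (inL i) j = a i j) (hR : ∀ i j, M (inR i) j = b i j) :
    M = stk a b := by
  ext p j
  obtain ⟨s, rfl⟩ := finSumFinEquiv.surjective p
  cases s with
  | inl i => rw [show finSumFinEquiv (Sum.inl i) = inL i from rfl, hL, stk_inL]
  | inr i => rw [show finSumFinEquiv (Sum.inr i) = inR i from rfl, hR, stk_inR]

theorem stk_eq_zero_iff {R : Type*} [Zero R] {d m : ℕ} {a b : Matrix (Fin d) (Fin m) R} :
    stk a b = (0 : Matrix (Fin (d + d)) (Fin m) R) ↔ a = 0 ∧ b = 0 := by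
  constructor
  · intro h
    constructor <;> ext i j
    · have := congrFun (congrFun h (inL i)) j; simpa using this
    · have := congrFun (congrFun h (inR i)) j; simpa using this
  · rintro ⟨rfl, rfl⟩
    ext p j
    obtain ⟨s, rfl⟩ := finSumFinEquiv.surjective p
    cases s <;> simp only [stk, Matrix.of_apply, Equiv.symm_apply_apply, Sum.elim_inl, Sum.elim_inr, Matrix.zero_apply]

theorem stk_smul {d m : ℕ} (c : ℝ) (a b : Matrix (Fin d) (Fin m) ℝ) :
    stk (c • a) (c • b) = c • stk a b := by
  ext p j
  obtain ⟨s, rfl⟩ := finSumFinEquiv.surjective p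
  cases s <;> simp only [stk, Matrix.of_apply, Equiv.symm_apply_apply, Sum.elim_inl, Sum.elim_inr,
    Matrix.smul_apply, smul_eq_mul]

theorem transpose_stk_mul_stk {d m m' : ℕ} (a b : Matrix (Fin d) (Fin m) ℝ)
    (a' b' : Matrix (Fin d) (Fin m') ℝ) :
    (stk a b)ᵀ * stk a' b' = aᵀ * a' + bᵀ * b' := by
  ext i j
  simp only [Matrix.mul_apply, Matrix.add_apply, Matrix.transpose_apply]
  rw [sum_fin_double (fun k => stk a b k i * stk a' b' k j)]
  simp

theorem stk_mul_transpose_stk {d d' m : ℕ} (a b : Matrix (Fin d) (Fin m) ℝ)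
    (a' b' : Matrix (Fin d') (Fin m) ℝ) :
    stk a b * (stk a' b')ᵀ = blk4 (a * a'ᵀ) (a * b'ᵀ) (b * a'ᵀ) (b * b'ᵀ) := by
  apply ext_double <;> intro i j <;>
    simp [Matrix.mul_apply]

theorem blk4_mul_stk {d e m : ℕ} (P Q R S : Matrix (Fin d) (Fin e) ℝ)
    (a b : Matrix (Fin e) (Fin m) ℝ) :
    blk4 P Q R S * stk a b = stk (P * a + Q * b) (R * a + S * b) := by
  apply stk_ext <;> intro i j <;>
  · simp only [Matrix.mul_apply, Matrix.add_apply]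
    rw [sum_fin_double]
    simp [Finset.sum_add_distrib]

theorem rmulE_blk4_stk {d e m : ℕ} (X Y Z W : Matrix (Fin d) (Fin e) E)
    (a b : Matrix (Fin e) (Fin m) ℝ) :
    rmulE (blk4 X Y Z W) (stk a b)
      = stk (rmulE X a + rmulE Y b) (rmulE Z a + rmulE W b) := by
  apply stk_ext <;> intro i j <;>
  · simp only [rmulE_apply', Matrix.add_apply]
    rw [sum_fin_double]
    simp [rmulE_apply', Finset.sum_add_distrib]

theorem lmul_transpose_stk_stk {d m p : ℕ} (a b : Matrix (Fin d) (Fin m) ℝ)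
    (X Y : Matrix (Fin d) (Fin p) E) :
    lmul (stk a b)ᵀ (stk X Y) = lmul aᵀ X + lmul bᵀ Y := by
  ext i j
  simp only [lmul_apply', Matrix.add_apply, Matrix.transpose_apply]
  rw [sum_fin_double (fun k => stk a b k i • stk X Y k j)]
  simp

theorem lmul_blk4_blk4 {d e f : ℕ} (P Q R S : Matrix (Fin d) (Fin e) ℝ)
    (X Y Z W : Matrix (Fin e) (Fin f) E) :
    lmul (blk4 P Q R S) (blk4 X Y Z W)
      = blk4 (lmul P X + lmul Q Z) (lmul P Y + lmul Q W)
          (lmul R X + lmul S Z) (lmul R Y + lmul S W) := by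
  apply ext_double <;> intro i j <;>
  · simp only [lmul_apply', Matrix.add_apply]
    rw [sum_fin_double]
    simp [lmul_apply', Finset.sum_add_distrib]

theorem rmulE_blk4_blk4 {d e f : ℕ} (X Y Z W : Matrix (Fin d) (Fin e) E)
    (P Q R S : Matrix (Fin e) (Fin f) ℝ) :
    rmulE (blk4 X Y Z W) (blk4 P Q R S)
      = blk4 (rmulE X P + rmulE Y R) (rmulE X Q + rmulE Y S)
          (rmulE Z P + rmulE W R) (rmulE Z Q + rmulE W S) := by
  apply ext_double <;> intro i j <;>
  · simp only [rmulE_apply', Matrix.add_apply]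
    rw [sum_fin_double]
    simp [rmulE_apply', Finset.sum_add_distrib]

theorem blk4_inj {R : Type*} {d e : ℕ} {A B C D A' B' C' D' : Matrix (Fin d) (Fin e) R}
    (h : blk4 A B C D = blk4 A' B' C' D') : A = A' ∧ B = B' ∧ C = C' ∧ D = D' := by
  refine ⟨?_, ?_, ?_, ?_⟩ <;> ext i j
  · have := congrFun (congrFun h (inL i)) (inL j); simpa using this
  · have := congrFun (congrFun h (inL i)) (inR j); simpa using this
  · have := congrFun (congrFun h (inR i)) (inL j); simpa using this
  · have := congrFun (congrFun h (inR i)) (inR j); simpa using this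

end Blocks
/-! ### Core computations for the complexification -/

section Core

variable {E : Type*} [AddCommGroup E] [Module ℝ E]

/-- The (transposed) complex-structure matrix `[[0,1],[-1,0]]`. -/
def Jmt (d : ℕ) : Matrix (Fin (d + d)) (Fin (d + d)) ℝ := blk4 0 1 (-1) 0

theorem lmul_Jmt_cMat {d : ℕ} (x y : Matrix (Fin d) (Fin d) E) :
    lmul (Jmt d) (cMat x y) = blk4 y x (-x) y := by
  rw [cMat_eq_blk4, Jmt, lmul_blk4_blk4]
  simp [lmul_neg_left, lmul_neg_right]

theorem rmulE_cMat_Jmt {d : ℕ} (x y : Matrix (Fin d) (Fin d) E) :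
    rmulE (cMat x y) (Jmt d) = blk4 y x (-x) y := by
  rw [cMat_eq_blk4, Jmt, rmulE_blk4_blk4]
  simp [rmulE_neg_left, rmulE_neg_right]

theorem re_compressC {d n : ℕ} (a b : Matrix (Fin d) (Fin n) ℝ)
    (x y : Matrix (Fin d) (Fin d) E) :
    compress (stk a b) (cMat x y) = (compressC a b x y).1 := by
  rw [compress_eq, cMat_eq_blk4, rmulE_blk4_stk, lmul_transpose_stk_stk]
  rw [rmulE_neg_left, ← sub_eq_add_neg]
  rfl

theorem im_compressC {d n : ℕ} (a b : Matrix (Fin d) (Fin n) ℝ)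
    (x y : Matrix (Fin d) (Fin d) E) :
    (compressC a b x y).2 = lmul (stk a b)ᵀ (rmulE (lmul (Jmt d) (cMat x y)) (stk a b)) := by
  rw [lmul_Jmt_cMat, rmulE_blk4_stk, lmul_transpose_stk_stk]
  rw [rmulE_neg_left, show -rmulE x a + rmulE y b = -(rmulE x a - rmulE y b) by abel,
    lmul_neg_right, ← sub_eq_add_neg]
  rfl

theorem Jmt_mul_stk {d n : ℕ} (a b : Matrix (Fin d) (Fin n) ℝ) :
    Jmt d * stk a b = stk b (-a) := by
  rw [Jmt, blk4_mul_stk]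
  simp

theorem transpose_stk_Jmt_stk {d n : ℕ} (a b : Matrix (Fin d) (Fin n) ℝ) :
    (stk a b)ᵀ * (Jmt d * stk a b) = aᵀ * b - bᵀ * a := by
  rw [Jmt_mul_stk, transpose_stk_mul_stk, Matrix.mul_neg, ← sub_eq_add_neg]

theorem im_chain {d n : ℕ} (a b : Matrix (Fin d) (Fin n) ℝ) (x y : Matrix (Fin d) (Fin d) E)
    (hiso : (stk a b)ᵀ * stk a b = 1)
    (hcomm : RComm (stk a b * (stk a b)ᵀ) (cMat x y)) :
    (compressC a b x y).2 = lmul (aᵀ * b - bᵀ * a) (compress (stk a b) (cMat x y)) ∧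
    (compressC a b x y).2 = rmulE (compress (stk a b) (cMat x y)) (aᵀ * b - bᵀ * a) := by
  set β := stk a b with hβ
  set M := cMat x y with hM
  have hc : lmul (β * βᵀ) M = rmulE M (β * βᵀ) := hcomm
  have hδ : βᵀ * (Jmt d * β) = aᵀ * b - bᵀ * a := transpose_stk_Jmt_stk a b
  have hPβ : (β * βᵀ) * β = β := by rw [Matrix.mul_assoc, hiso, Matrix.mul_one]
  have hβP : βᵀ * (β * βᵀ) = βᵀ := by rw [← Matrix.mul_assoc, hiso, Matrix.one_mul]
  constructor
  · calc (compressC a b x y).2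
        = lmul βᵀ (rmulE (lmul (Jmt d) M) β) := im_compressC a b x y
      _ = lmul βᵀ (rmulE (lmul (Jmt d) M) ((β * βᵀ) * β)) := by rw [hPβ]
      _ = lmul βᵀ (rmulE (rmulE (lmul (Jmt d) M) (β * βᵀ)) β) := by
            rw [rmulE_mul (lmul (Jmt d) M) (β * βᵀ) β]
      _ = lmul βᵀ (rmulE (lmul (Jmt d) (rmulE M (β * βᵀ))) β) := by
            rw [lmul_rmulE (Jmt d) M (β * βᵀ)]
      _ = lmul βᵀ (rmulE (lmul (Jmt d) (lmul (β * βᵀ) M)) β) := by rw [hc]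
      _ = lmul βᵀ (rmulE (lmul (Jmt d * (β * βᵀ)) M) β) := by
            rw [lmul_mul (Jmt d) (β * βᵀ) M]
      _ = lmul βᵀ (lmul (Jmt d * (β * βᵀ)) (rmulE M β)) := by
            rw [lmul_rmulE (Jmt d * (β * βᵀ)) M β]
      _ = lmul (βᵀ * (Jmt d * (β * βᵀ))) (rmulE M β) := by
            rw [lmul_mul βᵀ (Jmt d * (β * βᵀ)) (rmulE M β)]
      _ = lmul ((aᵀ * b - bᵀ * a) * βᵀ) (rmulE M β) := by
            rw [show Jmt d * (β * βᵀ) = (Jmt d * β) * βᵀ from (Matrix.mul_assoc _ _ _).symm,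
              ← Matrix.mul_assoc, hδ]
      _ = lmul (aᵀ * b - bᵀ * a) (lmul βᵀ (rmulE M β)) := by
            rw [lmul_mul (aᵀ * b - bᵀ * a) βᵀ (rmulE M β)]
      _ = lmul (aᵀ * b - bᵀ * a) (compress β M) := rfl
  · calc (compressC a b x y).2
        = lmul βᵀ (rmulE (lmul (Jmt d) M) β) := im_compressC a b x y
      _ = lmul βᵀ (rmulE (rmulE M (Jmt d)) β) := by
            rw [hM, lmul_Jmt_cMat, rmulE_cMat_Jmt]
      _ = lmul βᵀ (rmulE M (Jmt d * β)) := by rw [← rmulE_mul M (Jmt d) β]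
      _ = lmul (βᵀ * (β * βᵀ)) (rmulE M (Jmt d * β)) := by rw [hβP]
      _ = lmul βᵀ (lmul (β * βᵀ) (rmulE M (Jmt d * β))) := by
            rw [← lmul_mul βᵀ (β * βᵀ) (rmulE M (Jmt d * β))]
      _ = lmul βᵀ (rmulE (lmul (β * βᵀ) M) (Jmt d * β)) := by
            rw [lmul_rmulE (β * βᵀ) M (Jmt d * β)]
      _ = lmul βᵀ (rmulE (rmulE M (β * βᵀ)) (Jmt d * β)) := by rw [hc]
      _ = lmul βᵀ (rmulE M ((β * βᵀ) * (Jmt d * β))) := by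
            rw [rmulE_mul M (β * βᵀ) (Jmt d * β)]
      _ = lmul βᵀ (rmulE M (β * (βᵀ * (Jmt d * β)))) := by rw [Matrix.mul_assoc]
      _ = lmul βᵀ (rmulE M (β * (aᵀ * b - bᵀ * a))) := by rw [hδ]
      _ = lmul βᵀ (rmulE (rmulE M β) (aᵀ * b - bᵀ * a)) := by
            rw [rmulE_mul M β (aᵀ * b - bᵀ * a)]
      _ = rmulE (lmul βᵀ (rmulE M β)) (aᵀ * b - bᵀ * a) := by
            rw [lmul_rmulE βᵀ (rmulE M β) (aᵀ * b - bᵀ * a)]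
      _ = rmulE (compress β M) (aᵀ * b - bᵀ * a) := rfl

theorem ccommC_of_rcomm {d n : ℕ} (a b : Matrix (Fin d) (Fin n) ℝ)
    (x y : Matrix (Fin d) (Fin d) E)
    (hcomm : RComm (stk a b * (stk a b)ᵀ) (cMat x y)) :
    CCommC (a * aᵀ + b * bᵀ) (b * aᵀ - a * bᵀ) x y := by
  have hc : lmul (stk a b * (stk a b)ᵀ) (cMat x y)
      = rmulE (cMat x y) (stk a b * (stk a b)ᵀ) := hcomm
  rw [stk_mul_transpose_stk, cMat_eq_blk4, lmul_blk4_blk4, rmulE_blk4_blk4] at hc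
  obtain ⟨e11, e12, e21, e22⟩ := blk4_inj hc
  constructor
  · have g := congrArg₂ (· + ·) e11 e22
    simp only [lmul_neg_right, rmulE_neg_left] at g
    show lmul (a * aᵀ + b * bᵀ) x - lmul (b * aᵀ - a * bᵀ) y
        = rmulE x (a * aᵀ + b * bᵀ) - rmulE y (b * aᵀ - a * bᵀ)
    rw [lmul_add_left, lmul_sub_left, rmulE_add_right, rmulE_sub_right]
    abel_nf at g ⊢
    exact g
  · have g := congrArg₂ (· - ·) e21 e12
    simp only [lmul_neg_right, rmulE_neg_left] at g
    show lmul (a * aᵀ + b * bᵀ) y + lmul (b * aᵀ - a * bᵀ) x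
        = rmulE y (a * aᵀ + b * bᵀ) + rmulE x (b * aᵀ - a * bᵀ)
    rw [lmul_add_left, lmul_sub_left, rmulE_add_right, rmulE_sub_right]
    abel_nf at g ⊢
    exact g

end Core
/-! ### Complex matrices over `ℝ`-linear data -/

section ComplexAux

variable {E : Type*} [AddCommGroup E] [Module ℝ E]

theorem mapre_one {n : ℕ} : (1 : Matrix (Fin n) (Fin n) ℂ).map Complex.re = 1 := by
  ext i j; by_cases h : i = j <;> simp [Matrix.one_apply, h]

theorem mapim_one {n : ℕ} : (1 : Matrix (Fin n) (Fin n) ℂ).map Complex.im = 0 := by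
  ext i j; by_cases h : i = j <;> simp [Matrix.one_apply, h]

theorem mapre_add {m n : ℕ} (T S : Matrix (Fin m) (Fin n) ℂ) :
    (T + S).map Complex.re = T.map Complex.re + S.map Complex.re := by
  ext i j; simp

theorem mapim_add {m n : ℕ} (T S : Matrix (Fin m) (Fin n) ℂ) :
    (T + S).map Complex.im = T.map Complex.im + S.map Complex.im := by
  ext i j; simp

theorem mapre_sub {m n : ℕ} (T S : Matrix (Fin m) (Fin n) ℂ) :
    (T - S).map Complex.re = T.map Complex.re - S.map Complex.re := by
  ext i j; simp

theorem mapim_sub {m n : ℕ} (T S : Matrix (Fin m) (Fin n) ℂ) :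
    (T - S).map Complex.im = T.map Complex.im - S.map Complex.im := by
  ext i j; simp

theorem mapre_mul {m n p : ℕ} (T : Matrix (Fin m) (Fin n) ℂ) (S : Matrix (Fin n) (Fin p) ℂ) :
    (T * S).map Complex.re
      = T.map Complex.re * S.map Complex.re - T.map Complex.im * S.map Complex.im := by
  ext i j
  simp only [Matrix.map_apply, Matrix.mul_apply, Matrix.sub_apply, Complex.re_sum,
    Complex.mul_re, Finset.sum_sub_distrib]

theorem mapim_mul {m n p : ℕ} (T : Matrix (Fin m) (Fin n) ℂ) (S : Matrix (Fin n) (Fin p) ℂ) :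
    (T * S).map Complex.im
      = T.map Complex.re * S.map Complex.im + T.map Complex.im * S.map Complex.re := by
  ext i j
  simp only [Matrix.map_apply, Matrix.mul_apply, Matrix.add_apply, Complex.im_sum,
    Complex.mul_im, Finset.sum_add_distrib]

theorem mapre_realsmul {m n : ℕ} (c : ℝ) (T : Matrix (Fin m) (Fin n) ℂ) :
    (c • T).map Complex.re = c • T.map Complex.re := by
  ext i j; simp [Complex.real_smul]

theorem mapim_realsmul {m n : ℕ} (c : ℝ) (T : Matrix (Fin m) (Fin n) ℂ) :
    (c • T).map Complex.im = c • T.map Complex.im := by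
  ext i j; simp [Complex.real_smul]

theorem matrix_eq_of_maps {m n : ℕ} {T S : Matrix (Fin m) (Fin n) ℂ}
    (hre : T.map Complex.re = S.map Complex.re)
    (him : T.map Complex.im = S.map Complex.im) : T = S := by
  ext i j
  have h1 := congrFun (congrFun hre i) j
  have h2 := congrFun (congrFun him i) j
  simp only [Matrix.map_apply] at h1 h2
  exact Complex.ext h1 h2

theorem mapre_conjTranspose_mul_self {d n : ℕ} (α : Matrix (Fin d) (Fin n) ℂ) :
    (αᴴ * α).map Complex.re
      = (α.map Complex.re)ᵀ * α.map Complex.re + (α.map Complex.im)ᵀ * α.map Complex.im := by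
  ext i j
  simp only [Matrix.map_apply, Matrix.mul_apply, Matrix.add_apply, Matrix.transpose_apply,
    Matrix.conjTranspose_apply, Complex.re_sum, RCLike.star_def, Complex.mul_re,
    Complex.conj_re, Complex.conj_im, Finset.sum_add_distrib, neg_mul, sub_neg_eq_add]

theorem mapim_conjTranspose_mul_self {d n : ℕ} (α : Matrix (Fin d) (Fin n) ℂ) :
    (αᴴ * α).map Complex.im
      = (α.map Complex.re)ᵀ * α.map Complex.im - (α.map Complex.im)ᵀ * α.map Complex.re := by
  ext i j
  simp only [Matrix.map_apply, Matrix.mul_apply, Matrix.sub_apply, Matrix.transpose_apply,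
    Matrix.conjTranspose_apply, Complex.im_sum, RCLike.star_def, Complex.mul_im,
    Complex.conj_re, Complex.conj_im, neg_mul, sub_eq_add_neg, Finset.sum_add_distrib,
    Finset.sum_neg_distrib]

theorem matrix_zero_of_maps {m n : ℕ} {T : Matrix (Fin m) (Fin n) ℂ}
    (hre : T.map Complex.re = 0) (him : T.map Complex.im = 0) : T = 0 := by
  apply matrix_eq_of_maps <;> ext i j <;>
    first
      | simpa using congrFun (congrFun hre i) j
      | simpa using congrFun (congrFun him i) j

/-- Complex-scalar commutation with a matrix over `E`. -/
def CComm {n : ℕ} (T : Matrix (Fin n) (Fin n) ℂ) (x : Matrix (Fin n) (Fin n) E) : Prop :=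
  RComm (T.map Complex.re) x ∧ RComm (T.map Complex.im) x

theorem CComm.one {n : ℕ} (x : Matrix (Fin n) (Fin n) E) : CComm 1 x := by
  constructor
  · rw [mapre_one]; exact RComm.one x
  · rw [mapim_one]; exact RComm.zero x

theorem CComm.sub {n : ℕ} {T S : Matrix (Fin n) (Fin n) ℂ} {x : Matrix (Fin n) (Fin n) E}
    (hT : CComm T x) (hS : CComm S x) : CComm (T - S) x := by
  exact ⟨by rw [mapre_sub]; exact hT.1.sub hS.1, by rw [mapim_sub]; exact hT.2.sub hS.2⟩

theorem CComm.add {n : ℕ} {T S : Matrix (Fin n) (Fin n) ℂ} {x : Matrix (Fin n) (Fin n) E}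
    (hT : CComm T x) (hS : CComm S x) : CComm (T + S) x := by
  exact ⟨by rw [mapre_add]; exact hT.1.add hS.1, by rw [mapim_add]; exact hT.2.add hS.2⟩

theorem CComm.mul {n : ℕ} {T S : Matrix (Fin n) (Fin n) ℂ} {x : Matrix (Fin n) (Fin n) E}
    (hT : CComm T x) (hS : CComm S x) : CComm (T * S) x := by
  constructor
  · rw [mapre_mul]; exact (hT.1.mul hS.1).sub (hT.2.mul hS.2)
  · rw [mapim_mul]; exact (hT.1.mul hS.2).add (hT.2.mul hS.1)

theorem CComm.smulR {n : ℕ} (c : ℝ) {T : Matrix (Fin n) (Fin n) ℂ} {x : Matrix (Fin n) (Fin n) E}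
    (hT : CComm T x) : CComm (c • T) x := by
  exact ⟨by rw [mapre_realsmul]; exact hT.1.smul c, by rw [mapim_realsmul]; exact hT.2.smul c⟩

theorem CComm.pow {n : ℕ} {T : Matrix (Fin n) (Fin n) ℂ} {x : Matrix (Fin n) (Fin n) E}
    (hT : CComm T x) (k : ℕ) : CComm (T ^ k) x := by
  induction k with
  | zero => simpa using CComm.one x
  | succ k ih => rw [pow_succ]; exact ih.mul hT

theorem CComm.zero {n : ℕ} (x : Matrix (Fin n) (Fin n) E) : CComm 0 x := by
  constructor <;>
  · show RComm ((0 : Matrix (Fin n) (Fin n) ℂ).map _) x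
    have : ((0 : Matrix (Fin n) (Fin n) ℂ).map Complex.re) = 0 := by ext i j; simp
    have : ((0 : Matrix (Fin n) (Fin n) ℂ).map Complex.im) = 0 := by ext i j; simp
    first
      | (rw [show ((0 : Matrix (Fin n) (Fin n) ℂ).map Complex.re) = 0 from by ext i j; simp];
          exact RComm.zero x)
      | (rw [show ((0 : Matrix (Fin n) (Fin n) ℂ).map Complex.im) = 0 from by ext i j; simp];
          exact RComm.zero x)

theorem CComm.finsum {n : ℕ} {ι : Type*} (s : Finset ι) (f : ι → Matrix (Fin n) (Fin n) ℂ)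
    {x : Matrix (Fin n) (Fin n) E} (h : ∀ i ∈ s, CComm (f i) x) :
    CComm (∑ i ∈ s, f i) x := by
  classical
  induction s using Finset.induction_on with
  | empty => simpa using CComm.zero x
  | insert _ _ hnot ih =>
      rw [Finset.sum_insert hnot]
      exact (h _ (Finset.mem_insert_self _ _)).add
        (ih fun i hi => h i (Finset.mem_insert_of_mem hi))

end ComplexAux
/-! ### A positive semidefinite witness from an antisymmetric real matrix -/

section PSDWitness

theorem sum_abs_nonneg' {n : ℕ} (δ : Matrix (Fin n) (Fin n) ℝ) :
    0 ≤ ∑ i, ∑ j, |δ i j| :=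
  Finset.sum_nonneg fun _ _ => Finset.sum_nonneg fun _ _ => abs_nonneg _

theorem posSemidef_witness {n : ℕ} (δ : Matrix (Fin n) (Fin n) ℝ) (hanti : δᵀ = -δ) :
    (((1 + ∑ i, ∑ j, |δ i j| : ℝ) : ℂ) • (1 : Matrix (Fin n) (Fin n) ℂ)
      + Complex.I • δ.map (fun r => (r : ℂ))).PosSemidef := by
  set D : ℝ := ∑ i, ∑ j, |δ i j| with hDdef
  have hD : 0 ≤ D := sum_abs_nonneg' δ
  have hδswap : ∀ i j, δ j i = -δ i j := fun i j => by
    have := congrFun (congrFun hanti i) j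
    simpa using this
  have hdii : ∀ i, δ i i = 0 := fun i => by
    have := hδswap i i; linarith
  refine Matrix.PosSemidef.of_dotProduct_mulVec_nonneg ?_ ?_
  · -- Hermitian
    ext i j
    simp only [Matrix.conjTranspose_apply, Matrix.add_apply, Matrix.smul_apply,
      Matrix.map_apply, Matrix.one_apply, smul_eq_mul, star_add, star_mul']
    by_cases h : i = j
    · subst h
      simp [hdii]
    · simp only [h, Ne.symm h, if_false, mul_zero, zero_add, star_zero, add_zero]
      rw [hδswap i j]
      push_cast
      simp [Complex.ext_iff]
  · intro v
    set A : ℝ := ∑ i, Complex.normSq (v i) with hAdef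
    have hA : 0 ≤ A := Finset.sum_nonneg fun _ _ => Complex.normSq_nonneg _
    have hAk : ∀ k, Complex.normSq (v k) ≤ A := fun k =>
      Finset.single_le_sum (fun k _ => Complex.normSq_nonneg _) (Finset.mem_univ k)
    have hsq : ∀ k, ‖v k‖ ^ 2 ≤ A := fun k => by
      have := hAk k
      rwa [Complex.normSq_eq_norm_sq] at this
    have hvv : ∀ i j, ‖v i‖ * ‖v j‖ ≤ A := fun i j => by
      nlinarith [hsq i, hsq j, two_mul_le_add_sq ‖v i‖ ‖v j‖, norm_nonneg (v i),
        norm_nonneg (v j)]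
    set B : ℂ := ∑ i, ∑ j, (δ i j : ℂ) * ((starRingEnd ℂ) (v i) * v j) with hBdef
    have hz : star v ⬝ᵥ ((((1 + D : ℝ) : ℂ) • (1 : Matrix (Fin n) (Fin n) ℂ)
        + Complex.I • δ.map (fun r => (r : ℂ))) *ᵥ v) = ((1 + D) * A : ℝ) + Complex.I * B := by
      simp only [Matrix.add_mulVec, Matrix.smul_mulVec, Matrix.one_mulVec,
        dotProduct_add, dotProduct_smul]
      congr 1
      · rw [smul_eq_mul]
        have hvA : star v ⬝ᵥ v = (A : ℂ) := by
          rw [hAdef]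
          simp only [dotProduct, Pi.star_apply, RCLike.star_def]
          push_cast
          exact Finset.sum_congr rfl fun i _ =>
            (Complex.normSq_eq_conj_mul_self (z := v i)).symm
        rw [hvA]
        push_cast
        ring
      · rw [smul_eq_mul]
        congr 1
        rw [hBdef]
        simp only [dotProduct, Matrix.mulVec, Matrix.map_apply, Pi.star_apply,
          RCLike.star_def, Finset.mul_sum]
        exact Finset.sum_congr rfl fun i _ => Finset.sum_congr rfl fun j _ => by ring
    have hstarB : (starRingEnd ℂ) B = -B := by
      calc (starRingEnd ℂ) B
          = ∑ i, ∑ j, (δ i j : ℂ) * (v i * (starRingEnd ℂ) (v j)) := by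
            rw [hBdef, map_sum]
            refine Finset.sum_congr rfl fun i _ => ?_
            rw [map_sum]
            refine Finset.sum_congr rfl fun j _ => ?_
            rw [_root_.map_mul, _root_.map_mul, Complex.conj_ofReal, Complex.conj_conj]
        _ = ∑ j, ∑ i, (δ i j : ℂ) * (v i * (starRingEnd ℂ) (v j)) := Finset.sum_comm
        _ = ∑ i, ∑ j, -((δ i j : ℂ) * ((starRingEnd ℂ) (v i) * v j)) := by
            refine Finset.sum_congr rfl fun i _ => Finset.sum_congr rfl fun j _ => ?_
            rw [hδswap i j]
            push_cast
            ring
        _ = -B := by rw [hBdef]; simp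
    have hBre : B.re = 0 := by
      have h1 : ((starRingEnd ℂ) B).re = B.re := Complex.conj_re B
      rw [hstarB] at h1
      simp only [Complex.neg_re] at h1
      linarith
    have habs : ‖B‖ ≤ D * A := by
      calc ‖B‖ ≤ ∑ i, ‖∑ j, (δ i j : ℂ) * ((starRingEnd ℂ) (v i) * v j)‖ :=
            norm_sum_le _ _
        _ ≤ ∑ i, ∑ j, ‖(δ i j : ℂ) * ((starRingEnd ℂ) (v i) * v j)‖ :=
            Finset.sum_le_sum fun i _ => norm_sum_le _ _
        _ ≤ ∑ i, ∑ j, |δ i j| * A := by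
            refine Finset.sum_le_sum fun i _ => Finset.sum_le_sum fun j _ => ?_
            rw [norm_mul, norm_mul, Complex.norm_real,
              show ‖(starRingEnd ℂ) (v i)‖ = ‖v i‖ from norm_star _, Real.norm_eq_abs]
            have := hvv i j
            have h0 : (0:ℝ) ≤ |δ i j| := abs_nonneg _
            nlinarith [norm_nonneg (v i), norm_nonneg (v j)]
        _ = D * A := by
            rw [hDdef, Finset.sum_mul]
            exact Finset.sum_congr rfl fun i _ => by rw [Finset.sum_mul]
    have hBim : B.im ≤ D * A := le_trans (le_trans (le_abs_self _)
      (Complex.abs_im_le_norm B)) habs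
    rw [hz]
    rw [Complex.le_def]
    constructor
    · simp only [Complex.add_re, Complex.ofReal_re, Complex.mul_re, Complex.I_re,
        Complex.I_im, Complex.zero_re, zero_mul, one_mul, zero_sub]
      nlinarith
    · simp only [Complex.add_im, Complex.ofReal_im, Complex.mul_im, Complex.I_re,
        Complex.I_im, Complex.zero_im, zero_mul, one_mul, zero_add, hBre, add_zero]

end PSDWitness
/-! ### A nontrivial spectral projection of a non-scalar positive matrix -/

section Spectral

theorem smul_one_diag {n : ℕ} (c : ℂ) :
    Matrix.diagonal (fun _ : Fin n => c) = c • (1 : Matrix (Fin n) (Fin n) ℂ) := by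
  ext i j
  by_cases h : i = j <;> simp [Matrix.diagonal_apply, Matrix.one_apply, h]

set_option maxHeartbeats 1000000 in
theorem spectral_projection_exists {n : ℕ} (T : Matrix (Fin n) (Fin n) ℂ)
    (hpsd : T.PosSemidef) (hne : T ≠ 0)
    (hnotscalar : ¬∃ c : ℝ, 0 < c ∧ T = (c : ℂ) • 1) :
    ∃ P : Matrix (Fin n) (Fin n) ℂ,
      (∃ (m : ℕ) (p : Polynomial ℝ), P = ∑ k ∈ Finset.range m, p.coeff k • T ^ k) ∧
      Pᴴ = P ∧ P * P = P ∧ P ≠ 0 ∧ 1 - P ≠ 0 := by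
  rcases Nat.eq_zero_or_pos n with hn | hn
  · subst hn
    exact absurd (by ext i j; exact i.elim0) hne
  have i0 : Fin n := ⟨0, hn⟩
  have hH : T.IsHermitian := hpsd.1
  obtain ⟨μ, hμdef⟩ : ∃ μ, μ = hH.eigenvalues := ⟨_, rfl⟩
  obtain ⟨U, hUdef⟩ : ∃ U, U = (Matrix.IsHermitian.eigenvectorUnitary hH : Matrix (Fin n) (Fin n) ℂ) :=
    ⟨_, rfl⟩
  have hU1 : star U * U = 1 := by
    rw [hUdef]
    exact (Unitary.mem_iff.mp (Matrix.IsHermitian.eigenvectorUnitary hH).prop).1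
  have hU2 : U * star U = 1 := by
    rw [hUdef]
    exact (Unitary.mem_iff.mp (Matrix.IsHermitian.eigenvectorUnitary hH).prop).2
  obtain ⟨Dg, hDgdef⟩ : ∃ Dg : Matrix (Fin n) (Fin n) ℂ,
      Dg = Matrix.diagonal (fun i => ((μ i : ℝ) : ℂ)) := ⟨_, rfl⟩
  have hspec : T = U * Dg * star U := by
    rw [hUdef, hDgdef, hμdef]
    exact hH.spectral_theorem
  by_cases hall : ∀ k, μ k = μ i0
  · exfalso
    have hDg1 : Dg = ((μ i0 : ℝ) : ℂ) • 1 := by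
      rw [hDgdef, show (fun i : Fin n => ((μ i : ℝ) : ℂ)) = fun _ : Fin n => ((μ i0 : ℝ) : ℂ) from
        funext fun k => by rw [hall k], smul_one_diag]
    have hT1 : T = ((μ i0 : ℝ) : ℂ) • 1 := by
      rw [hspec, hDg1, Matrix.mul_smul, Matrix.smul_mul, Matrix.mul_one, hU2]
    have h0 : 0 ≤ μ i0 := by
      rw [hμdef]; exact hpsd.eigenvalues_nonneg i0
    rcases eq_or_lt_of_le h0 with h0' | h0'
    · apply hne
      rw [hT1, ← h0']
      simp
    · exact hnotscalar ⟨μ i0, h0', hT1⟩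
  push_neg at hall
  obtain ⟨k0, hk0⟩ := hall
  obtain ⟨p, hpdef⟩ : ∃ p : Polynomial ℝ,
      p = Lagrange.interpolate (Finset.image μ Finset.univ) id
        (fun t => if t = μ i0 then 1 else 0) := ⟨_, rfl⟩
  have hint : ∀ i, p.eval (μ i) = if μ i = μ i0 then 1 else 0 := by
    intro i
    have hmem : μ i ∈ Finset.image μ Finset.univ :=
      Finset.mem_image_of_mem μ (Finset.mem_univ i)
    rw [hpdef]
    exact Lagrange.eval_interpolate_at_node (fun t => if t = μ i0 then 1 else 0)
      (Set.injOn_id _) hmem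
  obtain ⟨dvec, hdvecdef⟩ : ∃ dvec : Fin n → ℂ,
      dvec = fun i => if μ i = μ i0 then 1 else 0 := ⟨_, rfl⟩
  obtain ⟨P, hPdef⟩ : ∃ P : Matrix (Fin n) (Fin n) ℂ,
      P = ∑ k ∈ Finset.range (p.natDegree + 1), p.coeff k • T ^ k := ⟨_, rfl⟩
  have hTk : ∀ k : ℕ, T ^ k = U * Dg ^ k * star U := by
    intro k
    induction k with
    | zero => simp [hU2]
    | succ k ih =>
        rw [pow_succ, ih, hspec, pow_succ]
        rw [Matrix.mul_assoc (U * Dg ^ k) (star U) (U * Dg * star U)]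
        rw [← Matrix.mul_assoc (star U) (U * Dg) (star U), ← Matrix.mul_assoc (star U) U Dg,
          hU1, Matrix.one_mul]
        rw [← Matrix.mul_assoc (U * Dg ^ k) Dg (star U), Matrix.mul_assoc U (Dg ^ k) Dg]
  have hPdiag : P = U * Matrix.diagonal dvec * star U := by
    have h1 : P = U * (∑ k ∈ Finset.range (p.natDegree + 1), p.coeff k • Dg ^ k) * star U := by
      rw [hPdef, Matrix.mul_sum, Matrix.sum_mul]
      refine Finset.sum_congr rfl fun k _ => ?_
      rw [hTk k, Matrix.mul_smul, Matrix.smul_mul]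
    rw [h1]
    congr 1
    congr 1
    ext i j
    rw [Matrix.sum_apply]
    by_cases h : i = j
    · subst h
      simp only [Matrix.smul_apply, hDgdef, Matrix.diagonal_pow, Matrix.diagonal_apply_eq,
        Pi.pow_apply]
      simp only [hdvecdef]
      rw [show (if μ i = μ i0 then (1:ℂ) else 0) = ((p.eval (μ i) : ℝ) : ℂ) from by
        rw [hint i]; by_cases h : μ i = μ i0 <;> simp [h]]
      rw [Polynomial.eval_eq_sum_range, Complex.ofReal_sum]
      refine Finset.sum_congr rfl fun k _ => ?_
      rw [Complex.real_smul]
      push_cast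
      ring
    · simp only [Matrix.smul_apply, hDgdef, Matrix.diagonal_pow, Matrix.diagonal_apply_ne _ h,
        smul_zero, Finset.sum_const_zero, hdvecdef]
  have hdd : Matrix.diagonal dvec * Matrix.diagonal dvec = Matrix.diagonal dvec := by
    rw [Matrix.diagonal_mul_diagonal]
    ext i j
    by_cases hij : i = j
    · subst hij
      simp only [Matrix.diagonal_apply_eq, Pi.mul_apply, hdvecdef]
      by_cases h : μ i = μ i0 <;> simp [h]
    · simp [Matrix.diagonal_apply_ne _ hij]
  have hdstar : (Matrix.diagonal dvec)ᴴ = Matrix.diagonal dvec := by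
    rw [Matrix.diagonal_conjTranspose]
    ext i j
    by_cases hij : i = j
    · subst hij
      simp only [Matrix.diagonal_apply_eq, Pi.star_apply, hdvecdef]
      by_cases h : μ i = μ i0 <;> simp [h]
    · simp [Matrix.diagonal_apply_ne _ hij]
  have hextract : star U * P * U = Matrix.diagonal dvec := by
    rw [hPdiag, ← Matrix.mul_assoc (star U) (U * Matrix.diagonal dvec) (star U),
      ← Matrix.mul_assoc (star U) U (Matrix.diagonal dvec), hU1, Matrix.one_mul,
      Matrix.mul_assoc (Matrix.diagonal dvec) (star U) U, hU1, Matrix.mul_one]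
  refine ⟨P, ⟨p.natDegree + 1, p, hPdef⟩, ?_, ?_, ?_, ?_⟩
  · rw [hPdiag]
    simp only [Matrix.star_eq_conjTranspose, Matrix.conjTranspose_mul,
      Matrix.conjTranspose_conjTranspose, hdstar, Matrix.mul_assoc]
  · rw [hPdiag]
    rw [Matrix.mul_assoc (U * Matrix.diagonal dvec) (star U) (U * Matrix.diagonal dvec * star U)]
    rw [← Matrix.mul_assoc (star U) (U * Matrix.diagonal dvec) (star U),
      ← Matrix.mul_assoc (star U) U (Matrix.diagonal dvec), hU1, Matrix.one_mul]
    rw [← Matrix.mul_assoc (U * Matrix.diagonal dvec) (Matrix.diagonal dvec) (star U),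
      Matrix.mul_assoc U (Matrix.diagonal dvec) (Matrix.diagonal dvec), hdd]
  · intro h0
    have h2 := hextract
    rw [h0] at h2
    have h1 := congrFun (congrFun h2.symm i0) i0
    simp [Matrix.diagonal_apply_eq, hdvecdef] at h1
  · intro h0
    have hP1 : P = 1 := by
      have h2 := sub_eq_zero.mp h0
      exact h2.symm
    have h2 := hextract
    rw [hP1, Matrix.mul_one, hU1] at h2
    have h1 := congrFun (congrFun h2 k0) k0
    simp [Matrix.diagonal_apply_eq, hdvecdef, hk0] at h1

end Spectral
/-! ### Helper lemmas for the main theorem -/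

section Helpers

variable {E : Type*} [AddCommGroup E] [Module ℝ E]

theorem cMat_zero_eq_dSum {n : ℕ} (z : Matrix (Fin n) (Fin n) E) :
    cMat z 0 = dSum z z := by
  rw [cMat_eq_blk4, dSum_eq_blk4, neg_zero]

theorem mapre_witness {n : ℕ} (t : ℝ) (δ : Matrix (Fin n) (Fin n) ℝ) :
    (((t : ℝ) : ℂ) • (1 : Matrix (Fin n) (Fin n) ℂ)
      + Complex.I • δ.map (fun r => (r : ℂ))).map Complex.re = t • 1 := by
  ext i j
  by_cases h : i = j <;>
    simp [Matrix.one_apply, h, Matrix.map_apply, Matrix.smul_apply, Complex.ext_iff]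

theorem mapim_witness {n : ℕ} (t : ℝ) (δ : Matrix (Fin n) (Fin n) ℝ) :
    (((t : ℝ) : ℂ) • (1 : Matrix (Fin n) (Fin n) ℂ)
      + Complex.I • δ.map (fun r => (r : ℂ))).map Complex.im = δ := by
  ext i j
  by_cases h : i = j <;>
    simp [Matrix.one_apply, h, Matrix.map_apply, Matrix.smul_apply, Complex.ext_iff]

theorem mapre_coe_smul_one {n : ℕ} (c : ℝ) :
    (((c : ℝ) : ℂ) • (1 : Matrix (Fin n) (Fin n) ℂ)).map Complex.re = c • 1 := by
  ext i j
  by_cases h : i = j <;>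
    simp [Matrix.one_apply, h, Matrix.map_apply, Matrix.smul_apply, Complex.ext_iff]

theorem mapim_coe_smul_one {n : ℕ} (c : ℝ) :
    (((c : ℝ) : ℂ) • (1 : Matrix (Fin n) (Fin n) ℂ)).map Complex.im = 0 := by
  ext i j
  by_cases h : i = j <;>
    simp [Matrix.one_apply, h, Matrix.map_apply, Matrix.smul_apply, Complex.ext_iff]

theorem compressC_of_comm {n : ℕ} (a b : Matrix (Fin n) (Fin n) ℝ)
    (x : Matrix (Fin n) (Fin n) E) (ha : RComm a x) (hb : RComm b x) :
    compressC a b x 0 = (lmul (aᵀ * a + bᵀ * b) x, lmul (aᵀ * b - bᵀ * a) x) := by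
  have ha' : rmulE x a = lmul a x := ha.symm
  have hb' : rmulE x b = lmul b x := hb.symm
  unfold compressC
  rw [rmulE_zero_left, rmulE_zero_left, sub_zero, zero_add, ha', hb']
  congr 1
  · rw [← lmul_mul, ← lmul_mul, ← lmul_add_left]
  · rw [← lmul_mul, ← lmul_mul, ← lmul_sub_left]

theorem compressC_zero_zero {d n : ℕ} (a : Matrix (Fin d) (Fin n) ℝ)
    (z : Matrix (Fin d) (Fin d) E) :
    compressC a 0 z 0 = (compress a z, 0) := by
  unfold compressC
  simp only [rmulE_zero_left, rmulE_zero_right, Matrix.transpose_zero, lmul_zero_left,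
    lmul_zero_right, sub_zero, zero_add, add_zero, zero_sub, neg_zero]
  exact Prod.ext rfl rfl

end Helpers
/-! ### The two main implications -/

section MainLemmas

variable {E : Type*} [AddCommGroup E] [Module ℝ E]

theorem cextreme_of_cirred (K : NCConvexSet E) {n : ℕ} (x : Matrix (Fin n) (Fin n) E)
    (hext : IsExtremeIn K x) (hirr : CIrred x) : IsCExtremeInC K x 0 := by
  intro N d xs ys as bs hmem hnz hsum1 hsum2 hval1 hval2 i
  have hiso : (∑ j, (stk (as j) (bs j))ᵀ * stk (as j) (bs j)) = 1 := by
    rw [show (∑ j, (stk (as j) (bs j))ᵀ * stk (as j) (bs j))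
        = ∑ j, ((as j)ᵀ * as j + (bs j)ᵀ * bs j) from
      Finset.sum_congr rfl fun j _ => transpose_stk_mul_stk _ _ _ _]
    exact hsum1
  have hval : (∑ j, compress (stk (as j) (bs j)) (cMat (xs j) (ys j))) = x := by
    rw [show (∑ j, compress (stk (as j) (bs j)) (cMat (xs j) (ys j)))
        = ∑ j, (compressC (as j) (bs j) (xs j) (ys j)).1 from
      Finset.sum_congr rfl fun j _ => re_compressC _ _ _ _]
    exact hval1
  have hnz' : ∀ j, stk (as j) (bs j) ≠ 0 := fun j h => hnz j (stk_eq_zero_iff.mp h)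
  obtain ⟨c, β, hc, hβiso, hαeq, hβval, hβcomm⟩ :=
    hext N (fun j => d j + d j) (fun j => cMat (xs j) (ys j))
      (fun j => stk (as j) (bs j)) hmem hnz' hiso hval i
  have hcne : c ≠ 0 := ne_of_gt hc
  have hβeq : β = stk (c⁻¹ • as i) (c⁻¹ • bs i) := by
    rw [stk_smul, hαeq, smul_smul, inv_mul_cancel₀ hcne, one_smul]
  have hisoβ : (stk (c⁻¹ • as i) (c⁻¹ • bs i))ᵀ * stk (c⁻¹ • as i) (c⁻¹ • bs i) = 1 := by
    rw [← hβeq]; exact hβiso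
  have hxval : compress (stk (c⁻¹ • as i) (c⁻¹ • bs i)) (cMat (xs i) (ys i)) = x := by
    rw [← hβeq]; exact hβval
  have hcm : RComm (stk (c⁻¹ • as i) (c⁻¹ • bs i) * (stk (c⁻¹ • as i) (c⁻¹ • bs i))ᵀ)
      (cMat (xs i) (ys i)) := by
    rw [← hβeq]; exact hβcomm
  obtain ⟨h1, h2⟩ := im_chain (c⁻¹ • as i) (c⁻¹ • bs i) (xs i) (ys i) hisoβ hcm
  have hδanti : ((c⁻¹ • as i)ᵀ * (c⁻¹ • bs i) - (c⁻¹ • bs i)ᵀ * (c⁻¹ • as i))ᵀ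
      = -((c⁻¹ • as i)ᵀ * (c⁻¹ • bs i) - (c⁻¹ • bs i)ᵀ * (c⁻¹ • as i)) := by
    rw [Matrix.transpose_sub, Matrix.transpose_mul, Matrix.transpose_mul,
      Matrix.transpose_transpose, Matrix.transpose_transpose, neg_sub]
  have hRδ : RComm ((c⁻¹ • as i)ᵀ * (c⁻¹ • bs i) - (c⁻¹ • bs i)ᵀ * (c⁻¹ • as i)) x := by
    show lmul _ x = rmulE x _
    rw [← hxval, ← h1, h2]
  have hδ0 : (c⁻¹ • as i)ᵀ * (c⁻¹ • bs i) - (c⁻¹ • bs i)ᵀ * (c⁻¹ • as i) = 0 := by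
    by_contra hδ
    obtain ⟨c', _, hT⟩ := hirr
      (((1 + ∑ i', ∑ j', |((c⁻¹ • as i)ᵀ * (c⁻¹ • bs i)
          - (c⁻¹ • bs i)ᵀ * (c⁻¹ • as i)) i' j'| : ℝ) : ℂ)
        • (1 : Matrix (Fin n) (Fin n) ℂ)
        + Complex.I • ((c⁻¹ • as i)ᵀ * (c⁻¹ • bs i)
          - (c⁻¹ • bs i)ᵀ * (c⁻¹ • as i)).map (fun r => (r : ℂ)))
      (posSemidef_witness _ hδanti)
      (by
        intro h0
        apply hδ
        have h3 := mapim_witness (1 + ∑ i', ∑ j', |((c⁻¹ • as i)ᵀ * (c⁻¹ • bs i)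
          - (c⁻¹ • bs i)ᵀ * (c⁻¹ • as i)) i' j'|) ((c⁻¹ • as i)ᵀ * (c⁻¹ • bs i)
          - (c⁻¹ • bs i)ᵀ * (c⁻¹ • as i))
        rw [h0] at h3
        rw [← h3]
        ext a' b'
        simp)
      (by
        rw [mapre_witness]
        exact (RComm.one x).smul _)
      (by
        rw [mapim_witness]
        exact hRδ)
    have h3 := mapim_witness (1 + ∑ i', ∑ j', |((c⁻¹ • as i)ᵀ * (c⁻¹ • bs i)
      - (c⁻¹ • bs i)ᵀ * (c⁻¹ • as i)) i' j'|) ((c⁻¹ • as i)ᵀ * (c⁻¹ • bs i)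
      - (c⁻¹ • bs i)ᵀ * (c⁻¹ • as i))
    rw [hT, mapim_coe_smul_one] at h3
    exact hδ h3.symm
  refine ⟨c, c⁻¹ • as i, c⁻¹ • bs i, hc, ⟨?_, hδ0⟩, ?_, ?_, ?_, ?_⟩
  · rw [← transpose_stk_mul_stk]
    exact hisoβ
  · rw [smul_smul, mul_inv_cancel₀ hcne, one_smul]
  · rw [smul_smul, mul_inv_cancel₀ hcne, one_smul]
  · refine Prod.ext ?_ ?_
    · rw [← re_compressC]
      exact hxval
    · show (compressC (c⁻¹ • as i) (c⁻¹ • bs i) (xs i) (ys i)).2 = 0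
      rw [h1, hδ0, lmul_zero_left]
  · exact ccommC_of_rcomm _ _ _ _ hcm

end MainLemmas
section MainLemmas2

variable {E : Type*} [AddCommGroup E] [Module ℝ E]

set_option maxHeartbeats 1000000 in
theorem cirred_of_cextreme (K : NCConvexSet E) {n : ℕ} (x : Matrix (Fin n) (Fin n) E)
    (hx : x ∈ K.level n) (hce : IsCExtremeInC K x 0) : CIrred x := by
  intro T hpsd hne hreC himC
  by_contra hnot
  obtain ⟨P, ⟨m, p, hPrep⟩, hPH, hP2, hP0, hP1⟩ := spectral_projection_exists T hpsd hne hnot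
  have hn : 0 < n := by
    rcases Nat.eq_zero_or_pos n with h | h
    · subst h
      exact absurd (by ext i j; exact i.elim0) hP0
    · exact h
  have hCT : CComm T x := ⟨hreC, himC⟩
  have hCP : CComm P x := by
    rw [hPrep]
    exact CComm.finsum _ _ fun k _ => (hCT.pow k).smulR (p.coeff k)
  have hC1P : CComm (1 - P) x := (CComm.one x).sub hCP
  have hPP : Pᴴ * P = P := by rw [hPH, hP2]
  have h1PH : (1 - P)ᴴ = 1 - P := by
    rw [Matrix.conjTranspose_sub, Matrix.conjTranspose_one, hPH]
  have hQQ : (1 - P)ᴴ * (1 - P) = 1 - P := by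
    rw [h1PH, Matrix.sub_mul, Matrix.one_mul, Matrix.mul_sub, Matrix.mul_one, hP2]
    abel
  -- the two-term decomposition
  set a1 : Matrix (Fin n) (Fin n) ℝ := P.map Complex.re with ha1
  set b1 : Matrix (Fin n) (Fin n) ℝ := P.map Complex.im with hb1
  set a2 : Matrix (Fin n) (Fin n) ℝ := (1 - P).map Complex.re with ha2
  set b2 : Matrix (Fin n) (Fin n) ℝ := (1 - P).map Complex.im with hb2
  have hmem : ∀ j : Fin 2, cMat ((fun _ => x) j : Matrix (Fin n) (Fin n) E) ((fun _ => 0) j)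
      ∈ K.level (n + n) := by
    intro j
    show cMat x 0 ∈ K.level (n + n)
    rw [cMat_zero_eq_dSum]
    exact K.dSum_mem hx hx
  have hnz : ∀ j : Fin 2, ¬((![a1, a2] : Fin 2 → Matrix (Fin n) (Fin n) ℝ) j = 0
      ∧ (![b1, b2] : Fin 2 → Matrix (Fin n) (Fin n) ℝ) j = 0) := by
    intro j ⟨hja, hjb⟩
    fin_cases j
    · exact hP0 (matrix_zero_of_maps (by simpa using hja) (by simpa using hjb))
    · exact hP1 (matrix_zero_of_maps (by simpa using hja) (by simpa using hjb))
  have hsum1 : (∑ j : Fin 2, ((![a1, a2] j)ᵀ * ![a1, a2] j + (![b1, b2] j)ᵀ * ![b1, b2] j)) = 1 := by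
    rw [Fin.sum_univ_two]
    simp only [Matrix.cons_val_zero, Matrix.cons_val_one, Matrix.head_cons]
    rw [ha1, hb1, ha2, hb2, ← mapre_conjTranspose_mul_self, ← mapre_conjTranspose_mul_self,
      hPP, hQQ, ← mapre_add, add_sub_cancel, mapre_one]
  have hsum2 : (∑ j : Fin 2, ((![a1, a2] j)ᵀ * ![b1, b2] j - (![b1, b2] j)ᵀ * ![a1, a2] j)) = 0 := by
    rw [Fin.sum_univ_two]
    simp only [Matrix.cons_val_zero, Matrix.cons_val_one, Matrix.head_cons]
    rw [ha1, hb1, ha2, hb2, ← mapim_conjTranspose_mul_self, ← mapim_conjTranspose_mul_self,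
      hPP, hQQ, ← mapim_add, add_sub_cancel, mapim_one]
  have hcc1 : compressC a1 b1 x 0 = (lmul ((Pᴴ * P).map Complex.re) x,
      lmul ((Pᴴ * P).map Complex.im) x) := by
    rw [compressC_of_comm a1 b1 x hCP.1 hCP.2, mapre_conjTranspose_mul_self,
      mapim_conjTranspose_mul_self]
  have hcc2 : compressC a2 b2 x 0 = (lmul (((1 - P)ᴴ * (1 - P)).map Complex.re) x,
      lmul (((1 - P)ᴴ * (1 - P)).map Complex.im) x) := by
    rw [compressC_of_comm a2 b2 x hC1P.1 hC1P.2, mapre_conjTranspose_mul_self,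
      mapim_conjTranspose_mul_self]
  have hval1 : (∑ j : Fin 2, (compressC (![a1, a2] j) (![b1, b2] j)
      ((fun _ => x) j) ((fun _ => 0) j)).1) = x := by
    rw [Fin.sum_univ_two]
    simp only [Matrix.cons_val_zero, Matrix.cons_val_one, Matrix.head_cons]
    rw [show (compressC a1 b1 x 0).1 = lmul ((Pᴴ * P).map Complex.re) x from by rw [hcc1],
      show (compressC a2 b2 x 0).1 = lmul (((1 - P)ᴴ * (1 - P)).map Complex.re) x from by
        rw [hcc2]]
    rw [hPP, hQQ, ← lmul_add_left, ← mapre_add, add_sub_cancel, mapre_one, lmul_one]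
  have hval2 : (∑ j : Fin 2, (compressC (![a1, a2] j) (![b1, b2] j)
      ((fun _ => x) j) ((fun _ => 0) j)).2) = 0 := by
    rw [Fin.sum_univ_two]
    simp only [Matrix.cons_val_zero, Matrix.cons_val_one, Matrix.head_cons]
    rw [show (compressC a1 b1 x 0).2 = lmul ((Pᴴ * P).map Complex.im) x from by rw [hcc1],
      show (compressC a2 b2 x 0).2 = lmul (((1 - P)ᴴ * (1 - P)).map Complex.im) x from by
        rw [hcc2]]
    rw [hPP, hQQ, ← lmul_add_left, ← mapim_add, add_sub_cancel, mapim_one, lmul_zero_left]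
  obtain ⟨c, βa, βb, hc, ⟨hi1, hi2⟩, ha, hb, _, _⟩ :=
    hce 2 (fun _ => n) (fun _ => x) (fun _ => 0) ![a1, a2] ![b1, b2]
      hmem hnz hsum1 hsum2 hval1 hval2 0
  simp only [Matrix.cons_val_zero] at ha hb
  -- P is a positive scalar multiple of 1
  have hPre : P.map Complex.re = (c * c) • 1 := by
    rw [show P.map Complex.re = (Pᴴ * P).map Complex.re from by rw [hPP],
      mapre_conjTranspose_mul_self, ← ha1, ← hb1, ha, hb, Matrix.transpose_smul,
      Matrix.transpose_smul, Matrix.smul_mul, Matrix.smul_mul, Matrix.mul_smul,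
      Matrix.mul_smul, smul_smul, smul_smul, ← smul_add, hi1]
  have hPim : P.map Complex.im = 0 := by
    rw [show P.map Complex.im = (Pᴴ * P).map Complex.im from by rw [hPP],
      mapim_conjTranspose_mul_self, ← ha1, ← hb1, ha, hb, Matrix.transpose_smul,
      Matrix.transpose_smul, Matrix.smul_mul, Matrix.smul_mul, Matrix.mul_smul,
      Matrix.mul_smul, smul_smul, smul_smul, ← smul_sub, hi2, smul_zero]
  have hPscalar : P = ((c * c : ℝ) : ℂ) • 1 := by
    apply matrix_eq_of_maps
    · rw [hPre, mapre_coe_smul_one]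
    · rw [hPim, mapim_coe_smul_one]
  -- idempotency forces c * c = 1, hence P = 1, contradiction
  have hc2 : ((c * c : ℝ) : ℂ) * ((c * c : ℝ) : ℂ) = ((c * c : ℝ) : ℂ) := by
    have h2 := hP2
    rw [hPscalar, Matrix.smul_mul, Matrix.mul_smul, smul_smul, Matrix.one_mul] at h2
    have h3 := congrFun (congrFun h2 ⟨0, hn⟩) ⟨0, hn⟩
    simpa [Matrix.smul_apply, Matrix.one_apply] using h3
  have hc1 : c * c = 1 := by
    have h4 : (c * c : ℝ) * (c * c) = c * c := by exact_mod_cast hc2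
    have h5 : (0 : ℝ) < c * c := mul_pos hc hc
    nlinarith
  apply hP1
  rw [hPscalar, hc1]
  simp

theorem cirred_one (x : Matrix (Fin 1) (Fin 1) E) : CIrred x := by
  intro T hpsd hne _ _
  have h00 : (0 : ℂ) ≤ T 0 0 := by
    have := hpsd.dotProduct_mulVec_nonneg (fun _ => 1)
    simpa [dotProduct, Matrix.mulVec, Fin.sum_univ_one] using this
  have hTne : T 0 0 ≠ 0 := by
    intro h
    apply hne
    ext i j
    rw [show i = 0 from Subsingleton.elim i 0, show j = 0 from Subsingleton.elim j 0, h]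
    rfl
  obtain ⟨hre0, him0⟩ := Complex.le_def.mp h00
  simp only [Complex.zero_re, Complex.zero_im] at hre0 him0
  refine ⟨(T 0 0).re, ?_, ?_⟩
  · rcases lt_or_eq_of_le hre0 with h | h
    · exact h
    · exfalso
      exact hTne (Complex.ext h.symm him0.symm)
  · ext i j
    rw [show i = 0 from Subsingleton.elim i 0, show j = 0 from Subsingleton.elim j 0]
    simp only [Matrix.smul_apply, Matrix.one_apply_eq, smul_eq_mul, mul_one]
    exact Complex.ext rfl him0.symm

theorem extreme_of_cextreme (K : NCConvexSet E) {n : ℕ} (x : Matrix (Fin n) (Fin n) E)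
    (hce : IsCExtremeInC K x 0) : IsExtremeIn K x := by
  intro N d xs αs hxs hnz hsum hval i
  have hmem : ∀ j, cMat (xs j) (0 : Matrix (Fin (d j)) (Fin (d j)) E)
      ∈ K.level (d j + d j) := by
    intro j
    rw [cMat_zero_eq_dSum]
    exact K.dSum_mem (hxs j) (hxs j)
  have hnz' : ∀ j, ¬(αs j = 0 ∧ (0 : Matrix (Fin (d j)) (Fin n) ℝ) = 0) :=
    fun j h => hnz j h.1
  have hsum1 : (∑ j, ((αs j)ᵀ * αs j
      + (0 : Matrix (Fin (d j)) (Fin n) ℝ)ᵀ * (0 : Matrix (Fin (d j)) (Fin n) ℝ))) = 1 := by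
    simpa using hsum
  have hsum2 : (∑ j, ((αs j)ᵀ * (0 : Matrix (Fin (d j)) (Fin n) ℝ)
      - (0 : Matrix (Fin (d j)) (Fin n) ℝ)ᵀ * αs j)) = 0 := by
    simp
  have hval1 : (∑ j, (compressC (αs j) (0 : Matrix (Fin (d j)) (Fin n) ℝ)
      (xs j) (0 : Matrix (Fin (d j)) (Fin (d j)) E)).1) = x := by
    rw [show (∑ j, (compressC (αs j) (0 : Matrix (Fin (d j)) (Fin n) ℝ)
        (xs j) (0 : Matrix (Fin (d j)) (Fin (d j)) E)).1)
        = ∑ j, compress (αs j) (xs j) from Finset.sum_congr rfl fun j _ => by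
      rw [compressC_zero_zero]]
    exact hval
  have hval2 : (∑ j, (compressC (αs j) (0 : Matrix (Fin (d j)) (Fin n) ℝ)
      (xs j) (0 : Matrix (Fin (d j)) (Fin (d j)) E)).2) = 0 := by
    rw [show (∑ j, (compressC (αs j) (0 : Matrix (Fin (d j)) (Fin n) ℝ)
        (xs j) (0 : Matrix (Fin (d j)) (Fin (d j)) E)).2)
        = ∑ j, (0 : Matrix (Fin n) (Fin n) E) from Finset.sum_congr rfl fun j _ => by
      rw [compressC_zero_zero]]
    simp
  obtain ⟨c, βa, βb, hc, ⟨hi1, hi2⟩, ha, hb, hcomp, hccomm⟩ :=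
    hce N d xs (fun j => (0 : Matrix (Fin (d j)) (Fin (d j)) E)) αs
      (fun j => (0 : Matrix (Fin (d j)) (Fin n) ℝ)) hmem hnz' hsum1 hsum2 hval1 hval2 i
  have hβb : βb = 0 := by
    have hb' : (0 : Matrix (Fin (d i)) (Fin n) ℝ) = c • βb := hb
    rcases smul_eq_zero.mp hb'.symm with h | h
    · exact absurd h (ne_of_gt hc)
    · exact h
  rw [hβb] at hi1 hcomp hccomm
  refine ⟨c, βa, hc, ?_, ha, ?_, ?_⟩
  · show βaᵀ * βa = 1
    rw [show (0 : Matrix (Fin (d i)) (Fin n) ℝ)ᵀ * (0 : Matrix (Fin (d i)) (Fin n) ℝ) = 0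
      from by simp, add_zero] at hi1
    exact hi1
  · rw [compressC_zero_zero] at hcomp
    exact (Prod.mk.injEq _ _ _ _).mp hcomp |>.1
  · obtain ⟨h1, _⟩ := hccomm
    show lmul (βa * βaᵀ) (xs i) = rmulE (xs i) (βa * βaᵀ)
    simp only [Matrix.zero_mul, Matrix.mul_zero, Matrix.transpose_zero, add_zero, sub_self,
      lmul_zero_left, lmul_zero_right, rmulE_zero_left, sub_zero] at h1
    exact h1

end MainLemmas2
/-- For `K` a real compact nc convex set: if `x ∈ K_n` is extreme
in `K`, then `x` is extreme in `K_c` if and only if `x` is complex-irreducible.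
In particular, `x ∈ K_1` is nc extreme in `K` iff `x + i0` is nc extreme in `K_c`. -/
theorem extreme_in_complexification_iff_complex_irreducible
    (E : Type) [AddCommGroup E] [Module ℝ E] [TopologicalSpace E]
    (K : NCConvexSet E) (hK : K.IsCompactSet) :
    (∀ {n : ℕ} (x : Matrix (Fin n) (Fin n) E), x ∈ K.level n → IsExtremeIn K x →
      (IsCExtremeInC K x 0 ↔ CIrred x)) ∧
    (∀ x : Matrix (Fin 1) (Fin 1) E, x ∈ K.level 1 →
      (IsExtremeIn K x ↔ IsCExtremeInC K x 0)) := by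
  refine ⟨?_, ?_⟩
  · intro n x hx hext
    exact ⟨fun hce => cirred_of_cextreme K x hx hce,
      fun hirr => cextreme_of_cirred K x hext hirr⟩
  · intro x _
    exact ⟨fun hext => cextreme_of_cirred K x hext (cirred_one x),
      fun hce => extreme_of_cextreme K x hce⟩

end NCC
end
end

section
/- For K a real compact nc convex set, an element x of the complexification K_c is complex maximal in K_c (with respect to dilations by complex isometries) if and only if it is real maximal in K_c (with respect to dilations by real isometries). -/
open Matrix Filter Topology
open scoped RealInnerProductSpace ComplexOrder

noncomputable section

namespace NCC

/-! ### Auxiliary infrastructure for Statement 16 -/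

section Aux16
set_option linter.unusedSectionVars false
variable {E : Type*} [AddCommGroup E] [Module ℝ E]

noncomputable instance : SMul ℂ (E × E) :=
  ⟨fun c p => (c.re • p.1 - c.im • p.2, c.im • p.1 + c.re • p.2)⟩

theorem csmul_def (c : ℂ) (p : E × E) :
    c • p = (c.re • p.1 - c.im • p.2, c.im • p.1 + c.re • p.2) := rfl

noncomputable instance : Module ℂ (E × E) where
  one_smul p := by simp [csmul_def]
  mul_smul c d p := by
    simp only [csmul_def, Complex.mul_re, Complex.mul_im, Prod.mk.injEq]
    constructor <;> module
  smul_zero c := by simp [csmul_def]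
  smul_add c p q := by
    simp only [csmul_def, Prod.fst_add, Prod.snd_add, Prod.mk_add_mk, Prod.mk.injEq]
    constructor <;> module
  add_smul c d p := by
    simp only [csmul_def, Complex.add_re, Complex.add_im, Prod.mk_add_mk, Prod.mk.injEq]
    constructor <;> module
  zero_smul p := by simp [csmul_def]

/-- Left multiplication of a pair-matrix by a complex scalar matrix. -/
noncomputable def clm {k l p : ℕ} (A : Matrix (Fin k) (Fin l) ℂ)
    (X : Matrix (Fin l) (Fin p) (E × E)) : Matrix (Fin k) (Fin p) (E × E) :=
  Matrix.of fun i j => ∑ t, A i t • X t j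

/-- Right multiplication of a pair-matrix by a complex scalar matrix. -/
noncomputable def crm {k l p : ℕ} (X : Matrix (Fin k) (Fin l) (E × E))
    (A : Matrix (Fin l) (Fin p) ℂ) : Matrix (Fin k) (Fin p) (E × E) :=
  Matrix.of fun i j => ∑ t, A t j • X i t

theorem clm_apply {k l p : ℕ} (A : Matrix (Fin k) (Fin l) ℂ)
    (X : Matrix (Fin l) (Fin p) (E × E)) (i j) : clm A X i j = ∑ t, A i t • X t j := rfl

theorem crm_apply {k l p : ℕ} (X : Matrix (Fin k) (Fin l) (E × E))
    (A : Matrix (Fin l) (Fin p) ℂ) (i j) : crm X A i j = ∑ t, A t j • X i t := rfl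

theorem clm_clm {k l p q : ℕ} (A : Matrix (Fin k) (Fin l) ℂ) (B : Matrix (Fin l) (Fin p) ℂ)
    (X : Matrix (Fin p) (Fin q) (E × E)) : clm A (clm B X) = clm (A * B) X := by
  refine Matrix.ext fun i j => ?_
  simp only [clm_apply, Matrix.mul_apply, Finset.smul_sum, Finset.sum_smul, smul_smul]
  exact Finset.sum_comm

theorem crm_crm {k l p q : ℕ} (X : Matrix (Fin k) (Fin l) (E × E))
    (A : Matrix (Fin l) (Fin p) ℂ) (B : Matrix (Fin p) (Fin q) ℂ) :
    crm (crm X A) B = crm X (A * B) := by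
  refine Matrix.ext fun i j => ?_
  simp only [crm_apply, Matrix.mul_apply, Finset.smul_sum, Finset.sum_smul, smul_smul]
  rw [Finset.sum_comm]
  simp [mul_comm]

theorem clm_crm {k l p q : ℕ} (A : Matrix (Fin k) (Fin l) ℂ)
    (X : Matrix (Fin l) (Fin p) (E × E)) (B : Matrix (Fin p) (Fin q) ℂ) :
    clm A (crm X B) = crm (clm A X) B := by
  refine Matrix.ext fun i j => ?_
  simp only [clm_apply, crm_apply, Finset.smul_sum, smul_smul]
  rw [Finset.sum_comm]
  simp [mul_comm]

theorem clm_one {k p : ℕ} (X : Matrix (Fin k) (Fin p) (E × E)) : clm 1 X = X := by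
  refine Matrix.ext fun i j => ?_
  simp [clm_apply, Matrix.one_apply, ite_smul]

theorem crm_one {k p : ℕ} (X : Matrix (Fin k) (Fin p) (E × E)) : crm X 1 = X := by
  refine Matrix.ext fun i j => ?_
  simp [crm_apply, Matrix.one_apply, ite_smul]

/-- `z + i w` as a pair-matrix. -/
def toP {k l : ℕ} (z w : Matrix (Fin k) (Fin l) E) : Matrix (Fin k) (Fin l) (E × E) :=
  Matrix.of fun i j => (z i j, w i j)

/-- `a + i b` as a complex scalar matrix. -/
def mkC {k l : ℕ} (a b : Matrix (Fin k) (Fin l) ℝ) : Matrix (Fin k) (Fin l) ℂ :=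
  Matrix.of fun i j => ⟨a i j, b i j⟩

theorem toP_inj {k l : ℕ} {z w z' w' : Matrix (Fin k) (Fin l) E}
    (h : toP z w = toP z' w') : z = z' ∧ w = w' := by
  constructor <;> ext i j
  · exact congrArg Prod.fst (congrFun (congrFun h i) j)
  · exact congrArg Prod.snd (congrFun (congrFun h i) j)

theorem mkC_conjTranspose {k l : ℕ} (a b : Matrix (Fin k) (Fin l) ℝ) :
    (mkC a b)ᴴ = mkC aᵀ (-bᵀ) := by
  ext i j
  simp [mkC, Matrix.conjTranspose_apply, Complex.ext_iff]

theorem compressC_toP {m n : ℕ} (a b : Matrix (Fin m) (Fin n) ℝ)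
    (z w : Matrix (Fin m) (Fin m) E) :
    toP (compressC a b z w).1 (compressC a b z w).2 =
      clm (mkC a b)ᴴ (crm (toP z w) (mkC a b)) := by
  refine Matrix.ext fun i j => ?_
  refine Prod.ext ?_ ?_ <;>
  · simp only [compressC, toP, clm_apply, crm_apply, mkC, lmul, rmulE,
      Matrix.conjTranspose_apply, Matrix.of_apply, Matrix.add_apply, Matrix.sub_apply,
      csmul_def, Prod.fst_sum, Prod.snd_sum, Matrix.transpose_apply, Complex.star_def,
      Complex.conj_re, Complex.conj_im, smul_sub, smul_add, Finset.smul_sum,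
      Prod.fst_sub, Prod.snd_sub, Prod.fst_add, Prod.snd_add, neg_neg, neg_smul,
      Finset.sum_sub_distrib, Finset.sum_add_distrib, sub_neg_eq_add, smul_neg,
      Finset.sum_neg_distrib]
    abel

theorem ccommC_iff {m : ℕ} (pr pim : Matrix (Fin m) (Fin m) ℝ)
    (z w : Matrix (Fin m) (Fin m) E) :
    CCommC pr pim z w ↔ clm (mkC pr pim) (toP z w) = crm (toP z w) (mkC pr pim) := by
  constructor
  · rintro ⟨h1, h2⟩
    refine Matrix.ext fun i j => ?_
    refine Prod.ext ?_ ?_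
    · have := congrFun (congrFun h1 i) j
      simp only [lmul, rmulE, Matrix.sub_apply, Matrix.of_apply] at this
      simp only [clm_apply, crm_apply, toP, mkC, Matrix.of_apply, csmul_def,
        Prod.fst_sum, Prod.snd_sum, Finset.sum_sub_distrib]
      linear_combination (norm := abel) this
    · have := congrFun (congrFun h2 i) j
      simp only [lmul, rmulE, Matrix.add_apply, Matrix.of_apply] at this
      simp only [clm_apply, crm_apply, toP, mkC, Matrix.of_apply, csmul_def,
        Prod.fst_sum, Prod.snd_sum, Finset.sum_add_distrib]
      linear_combination (norm := abel) this
  · intro h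
    constructor <;> ext i j
    · have := congrArg Prod.fst (congrFun (congrFun h i) j)
      simp only [clm_apply, crm_apply, toP, mkC, Matrix.of_apply, csmul_def,
        Prod.fst_sum, Finset.sum_sub_distrib] at this
      simp only [lmul, rmulE, Matrix.sub_apply, Matrix.of_apply]
      linear_combination (norm := abel) this
    · have := congrArg Prod.snd (congrFun (congrFun h i) j)
      simp only [clm_apply, crm_apply, toP, mkC, Matrix.of_apply, csmul_def,
        Prod.snd_sum, Finset.sum_add_distrib] at this
      simp only [lmul, rmulE, Matrix.add_apply, Matrix.of_apply]
      linear_combination (norm := abel) this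

theorem mkC_mul {k l p : ℕ} (a b : Matrix (Fin k) (Fin l) ℝ)
    (c d : Matrix (Fin l) (Fin p) ℝ) :
    mkC a b * mkC c d = mkC (a * c - b * d) (a * d + b * c) := by
  ext i j
  simp [mkC, Matrix.mul_apply, Complex.ext_iff, Complex.mul_re, Complex.mul_im,
    Finset.sum_sub_distrib, Finset.sum_add_distrib]

theorem mkC_eq_one {k : ℕ} {a b : Matrix (Fin k) (Fin k) ℝ} :
    mkC a b = 1 ↔ a = 1 ∧ b = 0 := by
  constructor
  · intro h
    constructor <;> ext i j
    · have h1 : a i j = ((1 : Matrix (Fin k) (Fin k) ℂ) i j).re := by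
        rw [← congrFun (congrFun h i) j]; rfl
      simpa [Matrix.one_apply, apply_ite Complex.re] using h1
    · have h1 : b i j = ((1 : Matrix (Fin k) (Fin k) ℂ) i j).im := by
        rw [← congrFun (congrFun h i) j]; rfl
      simpa [Matrix.one_apply, apply_ite Complex.im] using h1
  · rintro ⟨rfl, rfl⟩
    ext i j
    simp [mkC, Matrix.one_apply, Complex.ext_iff, apply_ite Complex.re, apply_ite Complex.im]

theorem isCIsometry_iff {m n : ℕ} (a b : Matrix (Fin m) (Fin n) ℝ) :
    IsCIsometry a b ↔ (mkC a b)ᴴ * (mkC a b) = 1 := by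
  rw [mkC_conjTranspose, mkC_mul, mkC_eq_one]
  unfold IsCIsometry
  constructor
  · rintro ⟨h1, h2⟩
    constructor
    · rw [Matrix.neg_mul, sub_neg_eq_add, h1]
    · rw [Matrix.neg_mul, ← sub_eq_add_neg, h2]
  · rintro ⟨h1, h2⟩
    constructor
    · rw [← h1, Matrix.neg_mul, sub_neg_eq_add]
    · rw [← h2, Matrix.neg_mul, ← sub_eq_add_neg]


/-! ### Block index machinery -/

theorem sum_split {m : ℕ} {A : Type*} [AddCommMonoid A] (f : Fin (m + m) → A) :
    ∑ i, f i = ∑ i : Fin m, f (inL i) + ∑ i : Fin m, f (inR i) := by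
  rw [← Equiv.sum_comp finSumFinEquiv f, Fintype.sum_sum_type]
  rfl

theorem inLR_cases {m : ℕ} (i : Fin (m + m)) :
    (∃ p : Fin m, i = inL p) ∨ (∃ p : Fin m, i = inR p) := by
  obtain ⟨s, rfl⟩ := finSumFinEquiv.surjective i
  cases s with
  | inl p => exact Or.inl ⟨p, rfl⟩
  | inr p => exact Or.inr ⟨p, rfl⟩

@[simp] theorem inL_inj {m : ℕ} {p q : Fin m} : inL p = inL q ↔ p = q := by
  unfold inL; rw [Equiv.apply_eq_iff_eq]; exact Sum.inl.injEq p q ▸ Iff.rfl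

@[simp] theorem inR_inj {m : ℕ} {p q : Fin m} : inR p = inR q ↔ p = q := by
  unfold inR; rw [Equiv.apply_eq_iff_eq]; exact Sum.inr.injEq p q ▸ Iff.rfl

@[simp] theorem inL_ne_inR {m : ℕ} {p q : Fin m} : inL p = inR q ↔ False := by
  unfold inL inR; rw [Equiv.apply_eq_iff_eq]; simp

@[simp] theorem inR_ne_inL {m : ℕ} {p q : Fin m} : inR p = inL q ↔ False := by
  unfold inL inR; rw [Equiv.apply_eq_iff_eq]; simp

@[simp] theorem cMat_LL {m : ℕ} (z w : Matrix (Fin m) (Fin m) E) (i j : Fin m) :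
    cMat z w (inL i) (inL j) = z i j := by
  unfold cMat inL
  rw [Matrix.reindex_apply, Matrix.submatrix_apply, Equiv.symm_apply_apply,
    Equiv.symm_apply_apply]
  rfl

@[simp] theorem cMat_LR {m : ℕ} (z w : Matrix (Fin m) (Fin m) E) (i j : Fin m) :
    cMat z w (inL i) (inR j) = -(w i j) := by
  unfold cMat inL inR
  rw [Matrix.reindex_apply, Matrix.submatrix_apply, Equiv.symm_apply_apply,
    Equiv.symm_apply_apply]
  rfl

@[simp] theorem cMat_RL {m : ℕ} (z w : Matrix (Fin m) (Fin m) E) (i j : Fin m) :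
    cMat z w (inR i) (inL j) = w i j := by
  unfold cMat inL inR
  rw [Matrix.reindex_apply, Matrix.submatrix_apply, Equiv.symm_apply_apply,
    Equiv.symm_apply_apply]
  rfl

@[simp] theorem cMat_RR {m : ℕ} (z w : Matrix (Fin m) (Fin m) E) (i j : Fin m) :
    cMat z w (inR i) (inR j) = z i j := by
  unfold cMat inR
  rw [Matrix.reindex_apply, Matrix.submatrix_apply, Equiv.symm_apply_apply,
    Equiv.symm_apply_apply]
  rfl

/-- The real block matrix `c(p + iq)`. -/
def rblk {k l : ℕ} (p q : Matrix (Fin k) (Fin l) ℝ) : Matrix (Fin (k + k)) (Fin (l + l)) ℝ :=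
  Matrix.reindex finSumFinEquiv finSumFinEquiv (Matrix.fromBlocks p (-q) q p)

@[simp] theorem rblk_LL {k l : ℕ} (p q : Matrix (Fin k) (Fin l) ℝ) (i j) :
    rblk p q (inL i) (inL j) = p i j := by
  unfold rblk inL
  rw [Matrix.reindex_apply, Matrix.submatrix_apply, Equiv.symm_apply_apply,
    Equiv.symm_apply_apply]
  rfl

@[simp] theorem rblk_LR {k l : ℕ} (p q : Matrix (Fin k) (Fin l) ℝ) (i j) :
    rblk p q (inL i) (inR j) = -(q i j) := by
  unfold rblk inL inR
  rw [Matrix.reindex_apply, Matrix.submatrix_apply, Equiv.symm_apply_apply,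
    Equiv.symm_apply_apply]
  rfl

@[simp] theorem rblk_RL {k l : ℕ} (p q : Matrix (Fin k) (Fin l) ℝ) (i j) :
    rblk p q (inR i) (inL j) = q i j := by
  unfold rblk inL inR
  rw [Matrix.reindex_apply, Matrix.submatrix_apply, Equiv.symm_apply_apply,
    Equiv.symm_apply_apply]
  rfl

@[simp] theorem rblk_RR {k l : ℕ} (p q : Matrix (Fin k) (Fin l) ℝ) (i j) :
    rblk p q (inR i) (inR j) = p i j := by
  unfold rblk inR
  rw [Matrix.reindex_apply, Matrix.submatrix_apply, Equiv.symm_apply_apply,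
    Equiv.symm_apply_apply]
  rfl

theorem isIsometry_rblk {k l : ℕ} {p q : Matrix (Fin k) (Fin l) ℝ}
    (h : IsCIsometry p q) : IsIsometry (rblk p q) := by
  obtain ⟨h1, h2⟩ := h
  ext I J
  rw [Matrix.mul_apply, sum_split]
  have e1 : ∀ i j : Fin l, ∑ t, p t i * p t j + ∑ t, q t i * q t j
      = (1 : Matrix (Fin l) (Fin l) ℝ) i j := by
    intro i j
    have := congrFun (congrFun h1 i) j
    simpa [Matrix.mul_apply, Matrix.add_apply, Matrix.transpose_apply] using this
  have e2 : ∀ i j : Fin l, ∑ t, p t i * q t j - ∑ t, q t i * p t j = 0 := by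
    intro i j
    have := congrFun (congrFun h2 i) j
    simpa [Matrix.mul_apply, Matrix.sub_apply, Matrix.transpose_apply] using this
  rcases inLR_cases I with ⟨i, rfl⟩ | ⟨i, rfl⟩ <;> rcases inLR_cases J with ⟨j, rfl⟩ | ⟨j, rfl⟩ <;>
    simp only [Matrix.transpose_apply, rblk_LL, rblk_LR, rblk_RL, rblk_RR,
      Matrix.one_apply, inL_inj, inR_inj, inL_ne_inR, inR_ne_inL, if_false]
  · rw [e1 i j]; simp [Matrix.one_apply]
  · rw [show ∑ t, p t i * -q t j + ∑ t, q t i * p t j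
        = -(∑ t, p t i * q t j - ∑ t, q t i * p t j) by
      simp [Finset.sum_sub_distrib, Finset.sum_neg_distrib]; abel, e2 i j]
    try simp
  · rw [show ∑ t, -q t i * p t j + ∑ t, p t i * q t j
        = (∑ t, p t i * q t j - ∑ t, q t i * p t j) by
      simp [Finset.sum_sub_distrib, Finset.sum_neg_distrib, mul_comm]; abel, e2 i j]
    try simp
  · rw [show ∑ t, -q t i * -q t j + ∑ t, p t i * p t j
        = ∑ t, p t i * p t j + ∑ t, q t i * q t j by simp; abel, e1 i j]
    simp [Matrix.one_apply]

theorem compress_rblk_cMat {k l : ℕ} (p q : Matrix (Fin k) (Fin l) ℝ)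
    (u v : Matrix (Fin k) (Fin k) E) :
    compress (rblk p q) (cMat u v)
      = cMat (compressC p q u v).1 (compressC p q u v).2 := by
  refine Matrix.ext fun I J => ?_
  rcases inLR_cases I with ⟨i, rfl⟩ | ⟨i, rfl⟩ <;> rcases inLR_cases J with ⟨j, rfl⟩ | ⟨j, rfl⟩ <;>
  · simp only [compress, lmul, rmulE, compressC, Matrix.of_apply, Matrix.transpose_apply,
      cMat_LL, cMat_LR, cMat_RL, cMat_RR, Matrix.add_apply, Matrix.sub_apply,
      sum_split (m := k), rblk_LL, rblk_LR, rblk_RL, rblk_RR,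
      smul_add, smul_sub, smul_neg, neg_smul, Finset.smul_sum,
      Finset.sum_add_distrib, Finset.sum_sub_distrib, Finset.sum_neg_distrib, neg_neg]
    abel

theorem cMat_zero {m : ℕ} (u : Matrix (Fin m) (Fin m) E) : cMat u 0 = dSum u u := by
  unfold cMat dSum
  rw [neg_zero]

/-- The complexification is closed under complex isometric compressions. -/
theorem kc_compressC_mem (K : NCConvexSet E) {k l : ℕ}
    {p q : Matrix (Fin k) (Fin l) ℝ} (h : IsCIsometry p q)
    {u v : Matrix (Fin k) (Fin k) E} (hm : cMat u v ∈ K.level (k + k)) :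
    cMat (compressC p q u v).1 (compressC p q u v).2 ∈ K.level (l + l) := by
  rw [← compress_rblk_cMat]
  exact K.compress_mem _ (isIsometry_rblk h) hm

/-! ### The complex dilation matrix -/

/-- `v₁ = (1+i)/2`. -/
def cv1 : ℂ := ⟨1/2, 1/2⟩
/-- `v₂ = (1-i)/2`. -/
def cv2 : ℂ := ⟨1/2, -(1/2)⟩

/-- `δ = [v₁ γ ; v₂ γ]`, a complex isometry when `γ` is. -/
def dmat {m n : ℕ} (γ : Matrix (Fin m) (Fin n) ℂ) : Matrix (Fin (m + m)) (Fin n) ℂ :=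
  Matrix.of fun i j =>
    Sum.elim (fun i' => cv1 * γ i' j) (fun i' => cv2 * γ i' j) (finSumFinEquiv.symm i)

@[simp] theorem dmat_L {m n : ℕ} (γ : Matrix (Fin m) (Fin n) ℂ) (i : Fin m) (j : Fin n) :
    dmat γ (inL i) j = cv1 * γ i j := by
  unfold dmat inL
  rw [Matrix.of_apply, Equiv.symm_apply_apply]
  rfl

@[simp] theorem dmat_R {m n : ℕ} (γ : Matrix (Fin m) (Fin n) ℂ) (i : Fin m) (j : Fin n) :
    dmat γ (inR i) j = cv2 * γ i j := by
  unfold dmat inR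
  rw [Matrix.of_apply, Equiv.symm_apply_apply]
  rfl

theorem dmat_isometry {m n : ℕ} {γ : Matrix (Fin m) (Fin n) ℂ} (h : γᴴ * γ = 1) :
    (dmat γ)ᴴ * dmat γ = 1 := by
  rw [← h]
  ext i j
  rw [Matrix.mul_apply, Matrix.mul_apply, sum_split]
  rw [← Finset.sum_add_distrib]
  refine Finset.sum_congr rfl fun t _ => ?_
  simp only [Matrix.conjTranspose_apply, dmat_L, dmat_R]
  simp only [Complex.ext_iff, Complex.add_re, Complex.add_im, Complex.mul_re, Complex.mul_im,
    Complex.star_def, Complex.conj_re, Complex.conj_im, cv1, cv2]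
  constructor <;> ring

theorem claimA {m n : ℕ} (γ : Matrix (Fin m) (Fin n) ℂ) (z w : Matrix (Fin m) (Fin m) E) :
    clm (dmat γ)ᴴ (crm (toP (cMat z w) 0) (dmat γ)) = clm γᴴ (crm (toP z w) γ) := by
  refine Matrix.ext fun i j => ?_
  simp only [clm_apply, crm_apply, Finset.smul_sum, smul_smul, Matrix.conjTranspose_apply]
  rw [sum_split]
  simp only [sum_split (m := m)]
  simp only [dmat_L, dmat_R, toP, Matrix.of_apply, Matrix.zero_apply]
  simp only [cMat_LL, cMat_LR, cMat_RL, cMat_RR]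
  simp only [← Finset.sum_add_distrib]
  refine Finset.sum_congr rfl fun t _ => ?_
  refine Finset.sum_congr rfl fun s _ => ?_
  refine Prod.ext ?_ ?_ <;>
  · simp only [csmul_def, Complex.mul_re, Complex.mul_im, Complex.star_def,
      Complex.conj_re, Complex.conj_im, cv1, cv2, Prod.fst_add, Prod.snd_add,
      smul_zero, add_zero, sub_zero, zero_add, Prod.fst_sub, Prod.snd_sub, smul_neg, neg_neg]
    module

theorem stepVII {m n : ℕ} (γ : Matrix (Fin m) (Fin n) ℂ) (z w : Matrix (Fin m) (Fin m) E)
    (h : clm (dmat γ * (dmat γ)ᴴ) (toP (cMat z w) 0)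
        = crm (toP (cMat z w) 0) (dmat γ * (dmat γ)ᴴ)) :
    clm (γ * γᴴ) (toP z w) = crm (toP z w) (γ * γᴴ) := by
  refine Matrix.ext fun i j => ?_
  have H := congrFun (congrFun h (inL i)) (inL j)
  have e1 : clm (dmat γ * (dmat γ)ᴴ) (toP (cMat z w) 0) (inL i) (inL j)
      = (((1/2 : ℝ)) : ℂ) • clm (γ * γᴴ) (toP z w) i j := by
    simp only [clm_apply, Matrix.mul_apply, Matrix.conjTranspose_apply,
      Finset.smul_sum, smul_smul, Finset.sum_smul]
    rw [sum_split]
    simp only [dmat_L, dmat_R, toP, Matrix.of_apply, Matrix.zero_apply]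
    simp only [cMat_LL, cMat_LR, cMat_RL, cMat_RR]
    simp only [← Finset.sum_add_distrib]
    refine Finset.sum_congr rfl fun t _ => ?_
    refine Finset.sum_congr rfl fun s _ => ?_
    refine Prod.ext ?_ ?_ <;>
    · simp only [csmul_def, Complex.mul_re, Complex.mul_im, Complex.star_def,
        Complex.conj_re, Complex.conj_im, cv1, cv2, Prod.fst_add, Prod.snd_add,
        smul_zero, add_zero, sub_zero, zero_add, Prod.fst_sub, Prod.snd_sub,
        smul_neg, neg_neg, Complex.ofReal_re, Complex.ofReal_im]
      module
  have e2 : crm (toP (cMat z w) 0) (dmat γ * (dmat γ)ᴴ) (inL i) (inL j)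
      = (((1/2 : ℝ)) : ℂ) • crm (toP z w) (γ * γᴴ) i j := by
    simp only [crm_apply, Matrix.mul_apply, Matrix.conjTranspose_apply,
      Finset.smul_sum, smul_smul, Finset.sum_smul]
    rw [sum_split]
    simp only [dmat_L, dmat_R, toP, Matrix.of_apply, Matrix.zero_apply]
    simp only [cMat_LL, cMat_LR, cMat_RL, cMat_RR]
    simp only [← Finset.sum_add_distrib]
    refine Finset.sum_congr rfl fun t _ => ?_
    refine Finset.sum_congr rfl fun s _ => ?_
    refine Prod.ext ?_ ?_ <;>
    · simp only [csmul_def, Complex.mul_re, Complex.mul_im, Complex.star_def,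
        Complex.conj_re, Complex.conj_im, cv1, cv2, Prod.fst_add, Prod.snd_add,
        smul_zero, add_zero, sub_zero, zero_add, Prod.fst_sub, Prod.snd_sub,
        smul_neg, neg_neg, Complex.ofReal_re, Complex.ofReal_im]
      module
  rw [e1, e2] at H
  have := congrArg (fun v : E × E => (((2 : ℝ)) : ℂ) • v) H
  simpa [smul_smul, show (((2:ℝ)):ℂ) * ((1/2:ℝ):ℂ) = 1 by push_cast; norm_num] using this

/-! ### Selector matrix and unitary completion -/

/-- The selector (inclusion) isometry `ℝ^n → ℝ^M`. -/
def selmat {M n : ℕ} (hn : n ≤ M) : Matrix (Fin M) (Fin n) ℝ :=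
  Matrix.of fun i j => if i = Fin.castLE hn j then 1 else 0

theorem selmat_isometry {M n : ℕ} (hn : n ≤ M) : IsIsometry (selmat hn) := by
  unfold IsIsometry
  ext j j'
  simp only [Matrix.mul_apply, Matrix.transpose_apply, selmat, Matrix.of_apply,
    ite_mul, one_mul, zero_mul, Finset.sum_ite_eq, Finset.mem_univ, if_true]
  simp [Matrix.one_apply, Fin.castLE_inj]

theorem mkC_selmat {M n : ℕ} (hn : n ≤ M) (i : Fin M) (j : Fin n) :
    mkC (selmat hn) 0 i j = if i = Fin.castLE hn j then 1 else 0 := by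
  simp [mkC, selmat, Complex.ext_iff, apply_ite Complex.re, apply_ite Complex.im]

theorem exists_unitary_completion {M n : ℕ} (hn : n ≤ M) (δ : Matrix (Fin M) (Fin n) ℂ)
    (hδ : δᴴ * δ = 1) :
    ∃ S : Matrix (Fin M) (Fin M) ℂ, Sᴴ * S = 1 ∧ S * (mkC (selmat hn) 0) = δ := by
  classical
  set v : Fin M → EuclideanSpace ℂ (Fin M) := fun k =>
    if h : (k : ℕ) < n then WithLp.toLp 2 (fun i => δ i ⟨(k : ℕ), h⟩) else 0 with hv
  set s : Set (Fin M) := {k | (k : ℕ) < n} with hs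
  have horth : Orthonormal ℂ (s.restrict v) := by
    rw [orthonormal_iff_ite]
    rintro ⟨k, hk⟩ ⟨l, hl⟩
    have hk' : (k : ℕ) < n := hk
    have hl' : (l : ℕ) < n := hl
    have h1 := congrFun (congrFun hδ ⟨(k : ℕ), hk'⟩) ⟨(l : ℕ), hl'⟩
    simp only [Matrix.mul_apply, Matrix.conjTranspose_apply, Matrix.one_apply] at h1
    change inner ℂ (v k) (v l) = _
    simp only [Set.restrict_apply, hv, dif_pos hk', dif_pos hl', PiLp.inner_apply,
      RCLike.inner_apply', PiLp.toLp_apply]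
    rw [show (∑ i, (starRingEnd ℂ) ((fun i => δ i ⟨(k:ℕ), hk'⟩) i) *
        ((fun i => δ i ⟨(l:ℕ), hl'⟩) i)) = ∑ i, star (δ i ⟨(k:ℕ), hk'⟩) * δ i ⟨(l:ℕ), hl'⟩
      from rfl, h1]
    simp [Fin.ext_iff, Subtype.ext_iff]
  obtain ⟨b, hb⟩ := horth.exists_orthonormalBasis_extension_of_card_eq
    (by simp [finrank_euclideanSpace_fin])
  refine ⟨Matrix.of fun i k => b k i, ?_, ?_⟩
  · ext k l
    have := (orthonormal_iff_ite.mp b.orthonormal) k l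
    simp only [PiLp.inner_apply, RCLike.inner_apply'] at this
    simp only [Matrix.mul_apply, Matrix.conjTranspose_apply, Matrix.of_apply,
      Matrix.one_apply]
    rw [show (∑ i, star (b k i) * b l i) = ∑ i, (starRingEnd ℂ) (b k i) * b l i from rfl]
    exact this
  · ext i j
    rw [Matrix.mul_apply]
    have hmem : Fin.castLE hn j ∈ s := by
      simp only [hs, Set.mem_setOf_eq, Fin.coe_castLE]
      exact j.isLt
    have hbj := hb (Fin.castLE hn j) hmem
    calc ∑ k, (Matrix.of fun i k => b k i) i k * mkC (selmat hn) 0 k j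
        = ∑ k, (if k = Fin.castLE hn j then b k i else 0) := by
          refine Finset.sum_congr rfl fun k _ => ?_
          rw [mkC_selmat]
          simp only [Matrix.of_apply]
          split <;> simp
      _ = b (Fin.castLE hn j) i := by rw [Finset.sum_ite_eq' Finset.univ]; simp
      _ = δ i j := by
          rw [hbj]
          simp only [hv, Fin.coe_castLE, dif_pos j.isLt, PiLp.toLp_apply]

theorem ncols_le {M n : ℕ} (δ : Matrix (Fin M) (Fin n) ℂ) (hδ : δᴴ * δ = 1) : n ≤ M := by
  classical
  set u : Fin n → EuclideanSpace ℂ (Fin M) := fun j => WithLp.toLp 2 (fun i => δ i j) with hu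
  have horth : Orthonormal ℂ u := by
    rw [orthonormal_iff_ite]
    intro k l
    have h1 := congrFun (congrFun hδ k) l
    simp only [Matrix.mul_apply, Matrix.conjTranspose_apply, Matrix.one_apply] at h1
    simp only [PiLp.inner_apply, RCLike.inner_apply', hu, PiLp.toLp_apply]
    rw [show (∑ i, (starRingEnd ℂ) (δ i k) * δ i l) = ∑ i, star (δ i k) * δ i l from rfl, h1]
  have hli := horth.linearIndependent
  have hcard := LinearIndependent.fintype_card_le_finrank hli
  simpa [finrank_euclideanSpace_fin] using hcard

theorem conj_transfer {M : ℕ} (S P : Matrix (Fin M) (Fin M) ℂ)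
    (C : Matrix (Fin M) (Fin M) (E × E)) (h1 : Sᴴ * S = 1) (h2 : S * Sᴴ = 1)
    (h : clm P (clm Sᴴ (crm C S)) = crm (clm Sᴴ (crm C S)) P) :
    clm (S * P * Sᴴ) C = crm C (S * P * Sᴴ) := by
  have e2 : crm (clm Sᴴ (crm C S)) Sᴴ = clm Sᴴ C := by
    rw [← clm_crm, crm_crm, h2, crm_one]
  calc clm (S * P * Sᴴ) C
      = clm S (clm P (clm Sᴴ C)) := by rw [clm_clm, clm_clm]
    _ = clm S (clm P (crm (clm Sᴴ (crm C S)) Sᴴ)) := by rw [e2]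
    _ = clm S (crm (clm P (clm Sᴴ (crm C S))) Sᴴ) := by rw [clm_crm]
    _ = clm S (crm (crm (clm Sᴴ (crm C S)) P) Sᴴ) := by rw [h]
    _ = clm S (crm (clm Sᴴ (crm C S)) (P * Sᴴ)) := by rw [crm_crm]
    _ = clm S (clm Sᴴ (crm (crm C S) (P * Sᴴ))) := by rw [← clm_crm]
    _ = clm (S * Sᴴ) (crm C (S * (P * Sᴴ))) := by rw [clm_clm, crm_crm]
    _ = crm C (S * P * Sᴴ) := by rw [h2, clm_one, Matrix.mul_assoc]

end Aux16


/-- For `K` a real compact nc convex set, an element of the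
complexification `K_c` is complex maximal in `K_c` if and only if it is real
maximal in `K_c`. -/
theorem complex_maximal_iff_real_maximal_in_complexification
    (E : Type) [AddCommGroup E] [Module ℝ E] [TopologicalSpace E]
    (K : NCConvexSet E) (hK : K.IsCompactSet) {n : ℕ}
    (x y : Matrix (Fin n) (Fin n) E) (hmem : cMat x y ∈ K.level (n + n)) :
    IsCMaxInC K x y ↔ IsRMaxInC K x y := by
  constructor
  · -- complex maximal implies real maximal
    intro hC m zz ww α hm hiso hcomp
    have hci : IsCIsometry α 0 := by
      constructor
      · simpa [IsIsometry] using hiso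
      · simp
    have h := hC zz ww α 0 hm hci hcomp
    convert h using 2 <;> simp
  · -- real maximal implies complex maximal
    intro hR m zz ww a b hm hiso hcomp
    set γ := mkC a b with hγdef
    have hγ : γᴴ * γ = 1 := (isCIsometry_iff a b).1 hiso
    have hδ : (dmat γ)ᴴ * dmat γ = 1 := dmat_isometry hγ
    have hn : n ≤ m + m := ncols_le (dmat γ) hδ
    obtain ⟨S, hS1, hS2⟩ := exists_unitary_completion hn (dmat γ) hδ
    have hSS : S * Sᴴ = 1 := mul_eq_one_comm.mp hS1
    set Sre : Matrix (Fin (m+m)) (Fin (m+m)) ℝ := Matrix.of fun i j => (S i j).re with hSre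
    set Sim : Matrix (Fin (m+m)) (Fin (m+m)) ℝ := Matrix.of fun i j => (S i j).im with hSim
    have hSmk : S = mkC Sre Sim := by
      refine Matrix.ext fun i j => ?_
      exact Complex.ext rfl rfl
    have hScIso : IsCIsometry Sre Sim := by
      rw [isCIsometry_iff, ← hSmk]
      exact hS1
    set Y := compressC Sre Sim (cMat zz ww) 0 with hY
    have hYmem : cMat Y.1 Y.2 ∈ K.level ((m+m)+(m+m)) :=
      kc_compressC_mem K hScIso (by rw [cMat_zero]; exact K.dSum_mem hm hm)
    set αc := mkC (selmat hn) 0 with hαc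
    have hYtoP : toP Y.1 Y.2 = clm Sᴴ (crm (toP (cMat zz ww) 0) S) := by
      rw [hY, compressC_toP, ← hSmk]
    have hx : toP x y = clm γᴴ (crm (toP zz ww) γ) := by
      have h5 := compressC_toP a b zz ww
      rw [hcomp] at h5
      exact h5
    have hKey : toP (compressC (selmat hn) 0 Y.1 Y.2).1 (compressC (selmat hn) 0 Y.1 Y.2).2
        = toP x y := by
      rw [compressC_toP, hYtoP, ← hαc, ← clm_crm, clm_clm, crm_crm, ← Matrix.conjTranspose_mul,
        hS2, claimA, ← hx]
    have hcomp2 : compressC (selmat hn) 0 Y.1 Y.2 = (x, y) := by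
      obtain ⟨h1, h2⟩ := toP_inj hKey
      exact Prod.ext h1 h2
    have hcm := hR Y.1 Y.2 (selmat hn) hYmem (selmat_isometry hn) hcomp2
    rw [ccommC_iff] at hcm
    rw [ccommC_iff]
    have hγγ : mkC (a * aᵀ + b * bᵀ) (b * aᵀ - a * bᵀ) = γ * γᴴ := by
      have e1 : a * aᵀ - b * (-bᵀ) = a * aᵀ + b * bᵀ := by
        rw [Matrix.mul_neg, sub_neg_eq_add]
      have e2 : a * (-bᵀ) + b * aᵀ = b * aᵀ - a * bᵀ := by
        rw [Matrix.mul_neg]; abel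
      rw [hγdef, mkC_conjTranspose, mkC_mul, e1, e2]
    rw [hγγ]
    have hP : mkC (selmat hn * (selmat hn)ᵀ) 0 = αc * αcᴴ := by
      rw [hαc, mkC_conjTranspose, Matrix.transpose_zero, neg_zero, mkC_mul]
      congr 1 <;> simp
    rw [hP, hYtoP] at hcm
    apply stepVII γ zz ww
    have hdd : dmat γ * (dmat γ)ᴴ = S * (αc * αcᴴ) * Sᴴ := by
      rw [← hS2, Matrix.conjTranspose_mul]
      simp only [Matrix.mul_assoc]
    rw [hdd]
    exact conj_transfer S (αc * αcᴴ) (toP (cMat zz ww) 0) hS1 hSS hcm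


end NCC
end
end
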